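/- arXiv:2003.08967 — 7 statements merged into one kernel-verified Lean document; each statement's English description precedes it below -/
import Mathlib

section
/- Let U be a random vector taking values in the nonnegative orthant of ℝ^n and Y = 𝒫(U), with probability mass function P_Y. Then for every y ∈ ℤ^n_{≥0} with P_Y(y) > 0 and every i ∈ [1:n], E[U_i | Y = y] = (y_i + 1) · P_Y(y + 1_i) / P_Y(y), where 1_i denotes the i-th standard basis vector. -/
open MeasureTheory ProbabilityTheory

noncomputable section

/-- The probability mass function of the Poisson distribution with (real) mean `m`,
evaluated at `k` (with the convention `0 ^ 0 = 1`). -/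
def poissonP (m : ℝ) (k : ℕ) : ℝ := m ^ k * Real.exp (-m) / (Nat.factorial k)

/-- `Y = 𝒫(U)` : `U` takes values in the nonnegative orthant and, conditionally on `U = u`,
the coordinates of `Y` are independent with `Y i` Poisson distributed with mean `u i`. -/
def IsPoissonObs {Ω : Type} [MeasurableSpace Ω] (μ : Measure Ω) {n : ℕ}
    (U : Ω → Fin n → ℝ) (Y : Ω → Fin n → ℕ) : Prop :=
  Measurable U ∧ Measurable Y ∧ (∀ ω i, 0 ≤ U ω i) ∧
    ∀ (y : Fin n → ℕ) (B : Set (Fin n → ℝ)), MeasurableSet B →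
      (μ {ω | Y ω = y ∧ U ω ∈ B}).toReal
        = ∫ ω in {ω | U ω ∈ B}, ∏ i, poissonP (U ω i) (y i) ∂μ

/-- Conditional expectation of `f` given the event `A`. -/
def condExpEvent {Ω : Type} [MeasurableSpace Ω] (μ : Measure Ω) (A : Set Ω)
    (f : Ω → ℝ) : ℝ :=
  (∫ ω in A, f ω ∂μ) / (μ A).toReal

lemma poissonP_nonneg {m : ℝ} (hm : 0 ≤ m) (k : ℕ) : 0 ≤ poissonP m k := by
  unfold poissonP; positivity

lemma poissonP_le_one {m : ℝ} (hm : 0 ≤ m) (k : ℕ) : poissonP m k ≤ 1 := by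
  unfold poissonP
  rw [div_le_one (by positivity)]
  have h1 : m ^ k / k.factorial ≤ Real.exp m := by
    calc m ^ k / k.factorial ≤ ∑ j ∈ Finset.range (k+1), m ^ j / j.factorial :=
          Finset.single_le_sum (f := fun j => m ^ j / (j.factorial : ℝ))
            (fun j _ => by positivity) (Finset.self_mem_range_succ k)
      _ ≤ Real.exp m := Real.sum_le_exp_of_nonneg hm _
  calc m ^ k * Real.exp (-m) ≤ (Real.exp m * k.factorial) * Real.exp (-m) := by
        have := (div_le_iff₀ (by positivity : (0:ℝ) < k.factorial)).mp h1
        exact mul_le_mul_of_nonneg_right this (Real.exp_nonneg _)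
    _ = 1 * k.factorial := by rw [mul_right_comm, ← Real.exp_add]; simp
    _ = k.factorial := one_mul _

lemma mul_poissonP (m : ℝ) (k : ℕ) : m * poissonP m k = ((k:ℝ)+1) * poissonP m (k+1) := by
  unfold poissonP
  have h : (Nat.factorial (k+1) : ℝ) = (k+1) * k.factorial := by
    rw [Nat.factorial_succ]; push_cast; ring
  rw [h]
  have hk : (k.factorial : ℝ) ≠ 0 := by positivity
  field_simp
  ring

lemma measurable_poissonP (k : ℕ) : Measurable fun m => poissonP m k := by
  unfold poissonP
  fun_prop

/-- for `Y = 𝒫(U)`, whenever `P_Y(y) > 0`,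
`E[U_i | Y = y] = (y_i + 1) P_Y(y + 1_i) / P_Y(y)`. -/
theorem stmt2 {Ω : Type} [MeasurableSpace Ω] (μ : Measure Ω) [IsProbabilityMeasure μ]
    {n : ℕ} (U : Ω → Fin n → ℝ) (Y : Ω → Fin n → ℕ)
    (hPo : IsPoissonObs μ U Y) :
    ∀ y : Fin n → ℕ, 0 < (μ {ω | Y ω = y}).toReal → ∀ i : Fin n,
      condExpEvent μ {ω | Y ω = y} (fun ω => U ω i)
        = ((y i : ℝ) + 1) * (μ {ω | Y ω = y + Pi.single i 1}).toReal
            / (μ {ω | Y ω = y}).toReal := by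
  obtain ⟨hU, hY, hUnn, hjoint⟩ := hPo
  intro y hy i
  -- the two densities
  set y' : Fin n → ℕ := y + Pi.single i 1 with hy'
  have hUi : ∀ ω j, 0 ≤ U ω j := hUnn
  -- measurability of products of poissonP
  have hgm : ∀ z : Fin n → ℕ, Measurable fun u : Fin n → ℝ => ∏ j, poissonP (u j) (z j) := by
    intro z
    exact Finset.measurable_prod _ fun j _ =>
      (measurable_poissonP (z j)).comp (measurable_pi_apply j)
  -- the products are in [0,1] on the range of U
  have hg01 : ∀ (z : Fin n → ℕ) ω, 0 ≤ ∏ j, poissonP (U ω j) (z j)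
      ∧ ∏ j, poissonP (U ω j) (z j) ≤ 1 := by
    intro z ω
    constructor
    · exact Finset.prod_nonneg fun j _ => poissonP_nonneg (hUnn ω j) _
    · exact Finset.prod_le_one (fun j _ => poissonP_nonneg (hUnn ω j) _)
        (fun j _ => poissonP_le_one (hUnn ω j) _)
  -- the joint law in ENNReal form
  have key : ∀ (z : Fin n → ℕ) (B : Set (Fin n → ℝ)), MeasurableSet B →
      μ {ω | Y ω = z ∧ U ω ∈ B}
        = ∫⁻ ω in {ω | U ω ∈ B}, ENNReal.ofReal (∏ j, poissonP (U ω j) (z j)) ∂μ := by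
    intro z B hB
    have hUB : MeasurableSet {ω | U ω ∈ B} := hU hB
    have hint : ∫ ω in {ω | U ω ∈ B}, ∏ j, poissonP (U ω j) (z j) ∂μ
        = (∫⁻ ω in {ω | U ω ∈ B}, ENNReal.ofReal (∏ j, poissonP (U ω j) (z j)) ∂μ).toReal := by
      refine integral_eq_lintegral_of_nonneg_ae ?_ ?_
      · exact Filter.Eventually.of_forall fun ω => (hg01 z ω).1
      · exact ((hgm z).comp hU).aestronglyMeasurable
    have hfin : ∫⁻ ω in {ω | U ω ∈ B}, ENNReal.ofReal (∏ j, poissonP (U ω j) (z j)) ∂μ ≤ 1 := by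
      calc ∫⁻ ω in {ω | U ω ∈ B}, ENNReal.ofReal (∏ j, poissonP (U ω j) (z j)) ∂μ
          ≤ ∫⁻ _ in {ω | U ω ∈ B}, 1 ∂μ := by
            refine lintegral_mono fun ω => ?_
            simpa using ENNReal.ofReal_le_one.mpr (hg01 z ω).2
        _ = μ {ω | U ω ∈ B} := setLIntegral_one _
        _ ≤ 1 := prob_le_one
    have h1 := hjoint z B hB
    rw [hint] at h1
    have hμfin : μ {ω | Y ω = z ∧ U ω ∈ B} ≠ ⊤ := measure_ne_top _ _
    exact (ENNReal.toReal_eq_toReal_iff' hμfin (hfin.trans_lt (by norm_num)).ne).mp h1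
  -- pushforward measures
  have hYy : MeasurableSet {ω | Y ω = y} := by
    have : {ω | Y ω = y} = Y ⁻¹' {y} := rfl
    rw [this]; exact hY (measurableSet_singleton y)
  set ν : Measure (Fin n → ℝ) := μ.map U with hν
  set ρ : Measure (Fin n → ℝ) := (μ.restrict {ω | Y ω = y}).map U with hρ
  have hρν : ρ = ν.withDensity (fun u => ENNReal.ofReal (∏ j, poissonP (u j) (y j))) := by
    ext B hB
    rw [hρ, Measure.map_apply hU hB, Measure.restrict_apply (hU hB),
      withDensity_apply _ hB, hν, setLIntegral_map hB ((hgm y).ennreal_ofReal) hU]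
    have hset : U ⁻¹' B ∩ {ω | Y ω = y} = {ω | Y ω = y ∧ U ω ∈ B} := by
      ext ω
      simp only [Set.mem_inter_iff, Set.mem_preimage, Set.mem_setOf_eq]
      tauto
    rw [hset, key y B hB]
    rfl
  -- the main lintegral computation
  have hLmap : ∫⁻ ω in {ω | Y ω = y}, ENNReal.ofReal (U ω i) ∂μ
      = ∫⁻ u, ENNReal.ofReal (u i) ∂ρ := by
    rw [hρ, lintegral_map (measurable_pi_apply i).ennreal_ofReal hU]
  have hL : ∫⁻ ω in {ω | Y ω = y}, ENNReal.ofReal (U ω i) ∂μ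
      = ENNReal.ofReal ((y i : ℝ) + 1) * μ {ω | Y ω = y'} := by
    rw [hLmap, hρν,
      lintegral_withDensity_eq_lintegral_mul ν ((hgm y).ennreal_ofReal)
        (measurable_pi_apply i).ennreal_ofReal]
    simp only [Pi.mul_apply]
    rw [hν, lintegral_map (by exact ((hgm y).ennreal_ofReal).mul (measurable_pi_apply i).ennreal_ofReal :
      Measurable fun a : Fin n → ℝ => ENNReal.ofReal (∏ j, poissonP (a j) (y j)) * ENNReal.ofReal (a i)) hU]
    have hpt : ∀ ω, ENNReal.ofReal (∏ j, poissonP (U ω j) (y j)) * ENNReal.ofReal (U ω i)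
        = ENNReal.ofReal ((y i : ℝ) + 1) * ENNReal.ofReal (∏ j, poissonP (U ω j) (y' j)) := by
      intro ω
      rw [← ENNReal.ofReal_mul (hg01 y ω).1, ← ENNReal.ofReal_mul (by positivity)]
      congr 1
      have h1 : ∏ j, poissonP (U ω j) (y j)
          = poissonP (U ω i) (y i) * ∏ j ∈ Finset.univ.erase i, poissonP (U ω j) (y j) :=
        (Finset.mul_prod_erase _ _ (Finset.mem_univ i)).symm
      have h2 : ∏ j, poissonP (U ω j) (y' j)
          = poissonP (U ω i) (y i + 1) * ∏ j ∈ Finset.univ.erase i, poissonP (U ω j) (y j) := by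
        rw [← Finset.mul_prod_erase Finset.univ (fun j => poissonP (U ω j) (y' j))
          (Finset.mem_univ i)]
        congr 1
        · congr 1
          simp [hy', Pi.add_apply, Pi.single_eq_same]
        · refine Finset.prod_congr rfl fun j hj => ?_
          have hji : j ≠ i := (Finset.mem_erase.mp hj).1
          simp [hy', Pi.add_apply, Pi.single_eq_of_ne hji]
      rw [h1, h2]
      have h3 := mul_poissonP (U ω i) (y i)
      linear_combination (∏ j ∈ Finset.univ.erase i, poissonP (U ω j) (y j)) * h3
    simp_rw [hpt]
    rw [lintegral_const_mul _
      (by exact ((hgm y').ennreal_ofReal).comp hU :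
        Measurable fun a => ENNReal.ofReal (∏ j, poissonP (U a j) (y' j)))]
    congr 1
    have hk := key y' Set.univ MeasurableSet.univ
    simp only [Set.mem_univ, and_true, Set.setOf_true, Measure.restrict_univ] at hk
    exact hk.symm
  -- finiteness
  have hfin' : μ {ω | Y ω = y'} ≤ 1 := by
    exact prob_le_one
  have hLfin : ∫⁻ ω in {ω | Y ω = y}, ENNReal.ofReal (U ω i) ∂μ ≠ ⊤ := by
    rw [hL]
    exact ENNReal.mul_ne_top ENNReal.ofReal_ne_top (hfin'.trans_lt (by norm_num)).ne
  -- conclude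
  have hIeq : ∫ ω in {ω | Y ω = y}, U ω i ∂μ
      = (∫⁻ ω in {ω | Y ω = y}, ENNReal.ofReal (U ω i) ∂μ).toReal := by
    refine integral_eq_lintegral_of_nonneg_ae (Filter.Eventually.of_forall fun ω => hUnn ω i) ?_
    exact ((measurable_pi_apply i).comp hU).aestronglyMeasurable
  unfold condExpEvent
  rw [hIeq, hL, ENNReal.toReal_mul, ENNReal.toReal_ofReal (by positivity)]
end
end

section
/- Let U be a random vector taking values in the nonnegative orthant of ℝ^n, Y = 𝒫(U), and suppose E[U | Y = y] = H y + c for every y ∈ ℤ^n_{≥0}, for some matrix H ∈ ℝ^{n×n} and vector c ∈ ℝ^n. Then for every i ∈ [1:n], c_i = P_Y(1_i)/P_Y(0) = E[U_i e^{−Σ_{j=1}^n U_j}] / E[e^{−Σ_{j=1}^n U_j}]; consequently c_i = 0 if U_i = 0 almost surely, and c_i > 0 otherwise. -/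
open MeasureTheory ProbabilityTheory

noncomputable section

/-- if `Y = 𝒫(U)` and `E[U | Y = y] = H y + c` for all `y`, then
`c i = P_Y(1_i)/P_Y(0) = E[U_i e^{-∑ U_j}]/E[e^{-∑ U_j}]`; consequently `c i = 0`
if `U_i = 0` almost surely, and `c i > 0` otherwise. -/
theorem stmt3 {Ω : Type} [MeasurableSpace Ω] (μ : Measure Ω) [IsProbabilityMeasure μ]
    {n : ℕ} (U : Ω → Fin n → ℝ) (Y : Ω → Fin n → ℕ)
    (hPo : IsPoissonObs μ U Y)
    (H : Matrix (Fin n) (Fin n) ℝ) (c : Fin n → ℝ)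
    (hlin : ∀ y : Fin n → ℕ, μ {ω | Y ω = y} ≠ 0 → ∀ i,
      condExpEvent μ {ω | Y ω = y} (fun ω => U ω i) = ∑ j, H i j * (y j : ℝ) + c i) :
    ∀ i : Fin n,
      c i = (μ {ω | Y ω = Pi.single i 1}).toReal / (μ {ω | Y ω = (0 : Fin n → ℕ)}).toReal
      ∧ c i = (∫ ω, U ω i * Real.exp (-∑ j, U ω j) ∂μ)
                / (∫ ω, Real.exp (-∑ j, U ω j) ∂μ)
      ∧ ((∀ᵐ ω ∂μ, U ω i = 0) → c i = 0)
      ∧ (¬ (∀ᵐ ω ∂μ, U ω i = 0) → 0 < c i) := by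
  obtain ⟨hU, hY, hU0, hkey⟩ := hPo
  intro i
  set g : Ω → ℝ := fun ω => Real.exp (-∑ j, U ω j) with hgdef
  have hUi : ∀ k : Fin n, Measurable fun ω => U ω k := fun k =>
    (measurable_pi_apply k).comp hU
  have hgmeas : Measurable g := (Finset.measurable_sum _ fun j _ => hUi j).neg.exp
  have hgpos : ∀ ω, 0 < g ω := fun ω => Real.exp_pos _
  have hsum0 : ∀ ω, 0 ≤ ∑ j, U ω j := fun ω =>
    Finset.sum_nonneg fun j _ => hU0 ω j
  have hgle : ∀ ω, g ω ≤ 1 := fun ω =>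
    Real.exp_le_one_iff.mpr (neg_nonpos.mpr (hsum0 ω))
  have hgint : Integrable g μ :=
    (integrable_const (1:ℝ)).mono' hgmeas.aestronglyMeasurable
      (Filter.Eventually.of_forall fun ω => by
        rw [Real.norm_eq_abs, abs_of_pos (hgpos ω)]; exact hgle ω)
  -- product identities
  have hprod0 : ∀ ω, (∏ k, poissonP (U ω k) ((0 : Fin n → ℕ) k)) = g ω := by
    intro ω
    simp only [Pi.zero_apply, poissonP, pow_zero, Nat.factorial_zero, Nat.cast_one,
      div_one, one_mul, hgdef]
    rw [← Real.exp_sum]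
    simp [Finset.sum_neg_distrib]
  have hprod1 : ∀ ω, (∏ k, poissonP (U ω k) ((Pi.single i 1 : Fin n → ℕ) k)) = U ω i * g ω := by
    intro ω
    have h1 : ∀ k, poissonP (U ω k) ((Pi.single i 1 : Fin n → ℕ) k)
        = (if k = i then U ω k else 1) * Real.exp (-(U ω k)) := by
      intro k
      rcases eq_or_ne k i with h | h <;>
        simp [poissonP, Pi.single_apply, h]
    rw [Finset.prod_congr rfl fun k _ => h1 k, Finset.prod_mul_distrib,
      Finset.prod_ite_eq' Finset.univ i (fun k => U ω k)]
    simp only [Finset.mem_univ, if_true, hgdef, ← Real.exp_sum]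
    rw [← Finset.sum_neg_distrib]
  -- step A : P_Y(0)
  have hA : (μ {ω | Y ω = (0 : Fin n → ℕ)}).toReal = ∫ ω, g ω ∂μ := by
    have h := hkey 0 Set.univ MeasurableSet.univ
    simp only [Set.mem_univ, and_true, Set.setOf_true, Measure.restrict_univ] at h
    rw [h]
    exact integral_congr_ae (Filter.Eventually.of_forall hprod0)
  -- step B : P_Y(1_i)
  have hB : (μ {ω | Y ω = Pi.single i 1}).toReal = ∫ ω, U ω i * g ω ∂μ := by
    have h := hkey (Pi.single i 1) Set.univ MeasurableSet.univ
    simp only [Set.mem_univ, and_true, Set.setOf_true, Measure.restrict_univ] at h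
    rw [h]
    exact integral_congr_ae (Filter.Eventually.of_forall hprod1)
  -- positivity of P0
  have hgintpos : 0 < ∫ ω, g ω ∂μ := by
    rw [integral_pos_iff_support_of_nonneg_ae
      (Filter.Eventually.of_forall fun ω => (hgpos ω).le) hgint]
    have : Function.support g = Set.univ :=
      Set.eq_univ_of_forall fun ω => (hgpos ω).ne'
    rw [this]
    simp
  have hP0pos : 0 < (μ {ω | Y ω = (0 : Fin n → ℕ)}).toReal := hA ▸ hgintpos
  have hμ0ne : μ {ω | Y ω = (0 : Fin n → ℕ)} ≠ 0 := by
    intro h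
    rw [h] at hP0pos
    simp at hP0pos
  -- step D : linearity at y = 0
  have hD : (∫ ω in {ω | Y ω = (0 : Fin n → ℕ)}, U ω i ∂μ)
      / (μ {ω | Y ω = (0 : Fin n → ℕ)}).toReal = c i := by
    have := hlin 0 hμ0ne i
    simpa [condExpEvent] using this
  -- step E : change of measure
  have hYset : MeasurableSet {ω | Y ω = (0 : Fin n → ℕ)} :=
    hY (measurableSet_singleton (0 : Fin n → ℕ))
  have hE : ∫ ω in {ω | Y ω = (0 : Fin n → ℕ)}, U ω i ∂μ = ∫ ω, U ω i * g ω ∂μ := by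
    set G : (Fin n → ℝ) → ℝ := fun x => Real.exp (-∑ j, x j) with hGdef
    have hGmeas : Measurable G :=
      (Finset.measurable_sum _ fun j _ => measurable_pi_apply j).neg.exp
    have hGU : ∀ ω, G (U ω) = g ω := fun ω => rfl
    have hm : Measure.map U (μ.restrict {ω | Y ω = (0 : Fin n → ℕ)})
        = (Measure.map U μ).withDensity (fun x => (Real.toNNReal (G x) : ENNReal)) := by
      ext B hB
      rw [Measure.map_apply hU hB, Measure.restrict_apply (hU hB)]
      rw [withDensity_apply _ hB,
        setLIntegral_map hB (hGmeas.real_toNNReal.coe_nnreal_ennreal) hU]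
      have hint : Integrable g (μ.restrict (U ⁻¹' B)) := hgint.restrict
      have hco : ∀ ω, ((Real.toNNReal (G (U ω)) : ENNReal)) = ENNReal.ofReal (g ω) := by
        intro ω; rw [hGU]; rfl
      calc μ (U ⁻¹' B ∩ {ω | Y ω = (0 : Fin n → ℕ)})
          = ENNReal.ofReal (∫ ω in U ⁻¹' B, g ω ∂μ) := by
            have h1 := hkey 0 B hB
            have hset : {ω | Y ω = (0 : Fin n → ℕ) ∧ U ω ∈ B}
                = U ⁻¹' B ∩ {ω | Y ω = (0 : Fin n → ℕ)} := by
              ext ω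
              exact ⟨fun h => ⟨h.2, h.1⟩, fun h => ⟨h.2, h.1⟩⟩
            rw [hset] at h1
            rw [← ENNReal.ofReal_toReal (measure_ne_top μ
              (U ⁻¹' B ∩ {ω | Y ω = (0 : Fin n → ℕ)}))]
            congr 1
            rw [h1]
            exact integral_congr_ae (Filter.Eventually.of_forall hprod0)
        _ = ∫⁻ ω in U ⁻¹' B, ENNReal.ofReal (g ω) ∂μ :=
            ofReal_integral_eq_lintegral_ofReal hint
              (Filter.Eventually.of_forall fun ω => (hgpos ω).le)
        _ = ∫⁻ ω in U ⁻¹' B, ((Real.toNNReal (G (U ω)) : ENNReal)) ∂μ := by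
            exact lintegral_congr fun ω => (hco ω).symm
    have e1 : ∫ ω in {ω | Y ω = (0 : Fin n → ℕ)}, U ω i ∂μ
        = ∫ x, x i ∂(Measure.map U (μ.restrict {ω | Y ω = (0 : Fin n → ℕ)})) :=
      (integral_map hU.aemeasurable
        (measurable_pi_apply i).aestronglyMeasurable).symm
    rw [e1, hm, integral_withDensity_eq_integral_smul hGmeas.real_toNNReal]
    rw [integral_map hU.aemeasurable]
    · apply integral_congr_ae
      apply Filter.Eventually.of_forall
      intro ω
      simp only [NNReal.smul_def, smul_eq_mul, hGU]
      rw [Real.coe_toNNReal _ (hgpos ω).le, mul_comm]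
    · exact ((hGmeas.real_toNNReal.coe_nnreal_real).smul
        (measurable_pi_apply i)).aestronglyMeasurable
  -- conclusion prep
  have hci : c i = (∫ ω, U ω i * g ω ∂μ) / (∫ ω, g ω ∂μ) := by
    rw [← hD, hE, ← hA]
  have hnumint : Integrable (fun ω => U ω i * g ω) μ := by
    refine (integrable_const (1:ℝ)).mono'
      ((hUi i).mul hgmeas).aestronglyMeasurable
      (Filter.Eventually.of_forall fun ω => ?_)
    rw [Real.norm_eq_abs, abs_of_nonneg (mul_nonneg (hU0 ω i) (hgpos ω).le)]
    have h1 : g ω ≤ Real.exp (-(U ω i)) := by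
      apply Real.exp_le_exp.mpr
      apply neg_le_neg
      exact Finset.single_le_sum (fun j _ => hU0 ω j) (Finset.mem_univ i)
    calc U ω i * g ω ≤ U ω i * Real.exp (-(U ω i)) :=
          mul_le_mul_of_nonneg_left h1 (hU0 ω i)
      _ ≤ Real.exp (U ω i) * Real.exp (-(U ω i)) := by
          apply mul_le_mul_of_nonneg_right _ (Real.exp_pos _).le
          linarith [Real.add_one_le_exp (U ω i)]
      _ = 1 := by rw [← Real.exp_add]; simp
  refine ⟨?_, ?_, ?_, ?_⟩
  · rw [hci, hA, hB]
  · exact hci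
  · intro hae
    rw [hci]
    have : (∫ ω, U ω i * g ω ∂μ) = 0 := by
      rw [integral_eq_zero_iff_of_nonneg_ae] <;> try
        exact hnumint
      · filter_upwards [hae] with ω h
        simp [h]
      · exact Filter.Eventually.of_forall fun ω =>
          mul_nonneg (hU0 ω i) (hgpos ω).le
    rw [this, zero_div]
  · intro hae
    rw [hci]
    apply div_pos _ hgintpos
    rw [integral_pos_iff_support_of_nonneg_ae
      (Filter.Eventually.of_forall fun ω => mul_nonneg (hU0 ω i) (hgpos ω).le) hnumint]
    have hsupp : Function.support (fun ω => U ω i * g ω) = {ω | U ω i ≠ 0} := by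
      ext ω
      simp [Function.mem_support, mul_ne_zero_iff, (hgpos ω).ne']
    rw [hsupp, pos_iff_ne_zero]
    intro h0
    exact hae ((ae_iff).mpr h0)
end
end

section
/- Let U be a random vector taking values in the nonnegative orthant of ℝ^n, Y = 𝒫(U), and suppose E[U | Y = y] = H y + c for every y ∈ ℤ^n_{≥0}, for some matrix H ∈ ℝ^{n×n} with entries h_ij and vector c ∈ ℝ^n. Then for every y ∈ ℤ^n_{≥0} with P_Y(y) > 0 and every i ∈ [1:n], P_Y(y + 1_i)/P_Y(y) = (Σ_{j=1}^n h_ij y_j + c_i)/(y_i + 1). -/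
open MeasureTheory ProbabilityTheory

noncomputable section

/-- if `Y = 𝒫(U)` and `E[U | Y = y] = H y + c` for all `y`, then for
every `y` with `P_Y(y) > 0` and every `i`,
`P_Y(y + 1_i)/P_Y(y) = (∑_j h_ij y_j + c_i)/(y_i + 1)`. -/
theorem stmt4 {Ω : Type} [MeasurableSpace Ω] (μ : Measure Ω) [IsProbabilityMeasure μ]
    {n : ℕ} (U : Ω → Fin n → ℝ) (Y : Ω → Fin n → ℕ)
    (hPo : IsPoissonObs μ U Y)
    (H : Matrix (Fin n) (Fin n) ℝ) (c : Fin n → ℝ)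
    (hlin : ∀ y : Fin n → ℕ, μ {ω | Y ω = y} ≠ 0 → ∀ i,
      condExpEvent μ {ω | Y ω = y} (fun ω => U ω i) = ∑ j, H i j * (y j : ℝ) + c i) :
    ∀ y : Fin n → ℕ, 0 < (μ {ω | Y ω = y}).toReal → ∀ i : Fin n,
      (μ {ω | Y ω = y + Pi.single i 1}).toReal / (μ {ω | Y ω = y}).toReal
        = (∑ j, H i j * (y j : ℝ) + c i) / ((y i : ℝ) + 1) := by
  obtain ⟨hU, hY, hU0, hkey⟩ := hPo
  -- the density function for a given `y`
  set G : (Fin n → ℕ) → (Fin n → ℝ) → ℝ := fun y u => ∏ j, poissonP (u j) (y j) with hGdef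
  have hGmeas : ∀ y, Measurable (G y) := by
    intro y
    exact Finset.measurable_prod _ fun j _ =>
      (measurable_poissonP (y j)).comp (measurable_pi_apply j)
  have hGnonneg : ∀ y ω, 0 ≤ G y (U ω) :=
    fun y ω => Finset.prod_nonneg fun j _ => poissonP_nonneg (hU0 ω j) _
  have hGle : ∀ y ω, G y (U ω) ≤ 1 := by
    intro y ω
    apply Finset.prod_le_one (fun j _ => poissonP_nonneg (hU0 ω j) _)
      (fun j _ => poissonP_le_one (hU0 ω j) _)
  have hYmeas : ∀ y' : Fin n → ℕ, MeasurableSet {ω | Y ω = y'} := by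
    intro y'
    exact hY (MeasurableSet.singleton y')
  -- ENNReal version of the key hypothesis
  have hkey' : ∀ (y' : Fin n → ℕ) (B : Set (Fin n → ℝ)), MeasurableSet B →
      μ ({ω | Y ω = y'} ∩ U ⁻¹' B)
        = ∫⁻ ω in U ⁻¹' B, ENNReal.ofReal (G y' (U ω)) ∂μ := by
    intro y' B hB
    have h1 := hkey y' B hB
    have hset : {ω | Y ω = y' ∧ U ω ∈ B} = {ω | Y ω = y'} ∩ U ⁻¹' B := rfl
    rw [hset] at h1
    have h2 : ∫ ω in {ω | U ω ∈ B}, ∏ i, poissonP (U ω i) (y' i) ∂μ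
        = (∫⁻ ω in U ⁻¹' B, ENNReal.ofReal (G y' (U ω)) ∂μ).toReal := by
      apply integral_eq_lintegral_of_nonneg_ae
      · exact Filter.Eventually.of_forall fun ω => hGnonneg y' ω
      · exact ((hGmeas y').comp hU).aestronglyMeasurable
    rw [h2] at h1
    have hfin : ∫⁻ ω in U ⁻¹' B, ENNReal.ofReal (G y' (U ω)) ∂μ ≠ ⊤ := by
      have : ∫⁻ ω in U ⁻¹' B, ENNReal.ofReal (G y' (U ω)) ∂μ
          ≤ ∫⁻ _ in U ⁻¹' B, 1 ∂μ := by
        apply lintegral_mono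
        intro ω
        simpa using ENNReal.ofReal_le_one.mpr (hGle y' ω)
      refine ne_top_of_le_ne_top ?_ this
      simp only [lintegral_one, Measure.restrict_apply_univ]
      exact (measure_lt_top μ _).ne
    exact (ENNReal.toReal_eq_toReal_iff' (measure_ne_top μ _) hfin).mp h1
  -- identification of the conditional law as a density
  have hmap : ∀ y' : Fin n → ℕ,
      Measure.map U (μ.restrict {ω | Y ω = y'})
        = (Measure.map U μ).withDensity (fun u => ENNReal.ofReal (G y' u)) := by
    intro y'
    ext B hB
    rw [Measure.map_apply hU hB, Measure.restrict_apply (hU hB),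
      withDensity_apply _ hB, setLIntegral_map hB ((hGmeas y').ennreal_ofReal) hU,
      Set.inter_comm]
    exact hkey' y' B hB
  -- transfer lemma
  have htrans : ∀ (y' : Fin n → ℕ) (f : (Fin n → ℝ) → ENNReal), Measurable f →
      ∫⁻ ω in {ω | Y ω = y'}, f (U ω) ∂μ
        = ∫⁻ ω, ENNReal.ofReal (G y' (U ω)) * f (U ω) ∂μ := by
    intro y' f hf
    calc ∫⁻ ω in {ω | Y ω = y'}, f (U ω) ∂μ
        = ∫⁻ u, f u ∂(Measure.map U (μ.restrict {ω | Y ω = y'})) :=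
          (lintegral_map hf hU).symm
      _ = ∫⁻ u, f u ∂((Measure.map U μ).withDensity (fun u => ENNReal.ofReal (G y' u))) := by
          rw [hmap]
      _ = ∫⁻ u, ENNReal.ofReal (G y' u) * f u ∂(Measure.map U μ) := by
          rw [lintegral_withDensity_eq_lintegral_mul _ ((hGmeas y').ennreal_ofReal) hf]
          rfl
      _ = ∫⁻ ω, ENNReal.ofReal (G y' (U ω)) * f (U ω) ∂μ :=
          lintegral_map (((hGmeas y').ennreal_ofReal).mul hf) hU
  intro y hpos i
  set y' : Fin n → ℕ := y + Pi.single i 1 with hy'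
  have hne : μ {ω | Y ω = y} ≠ 0 := by
    intro h
    rw [h] at hpos
    simp at hpos
  set L : ℝ := ∑ j, H i j * (y j : ℝ) + c i with hL
  set k : ℝ := (y i : ℝ) + 1 with hk
  have hkpos : (0:ℝ) < k := by positivity
  -- pointwise identity
  have hpt : ∀ u : Fin n → ℝ, k * G y' u = u i * G y u := by
    intro u
    have h1 : G (y') u
        = poissonP (u i) ((y') i) * ∏ j ∈ Finset.univ.erase i,
            poissonP (u j) ((y') j) := by
      rw [hGdef]
      exact (Finset.mul_prod_erase Finset.univ _ (Finset.mem_univ i)).symm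
    have h2 : G y u = poissonP (u i) (y i) * ∏ j ∈ Finset.univ.erase i,
        poissonP (u j) (y j) := by
      rw [hGdef]
      exact (Finset.mul_prod_erase Finset.univ _ (Finset.mem_univ i)).symm
    have h3 : ∀ j ∈ Finset.univ.erase i,
        poissonP (u j) ((y') j) = poissonP (u j) (y j) := by
      intro j hj
      have hji : j ≠ i := (Finset.mem_erase.mp hj).1
      have hyj : y' j = y j := by
        rw [hy']
        simp [Pi.single_eq_of_ne hji]
      rw [hyj]
    have h4 : y' i = y i + 1 := by rw [hy']; simp
    have h5 : k * poissonP (u i) (y i + 1) = u i * poissonP (u i) (y i) := by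
      unfold poissonP
      rw [hk, Nat.factorial_succ, pow_succ]
      have hf : (0:ℝ) < (Nat.factorial (y i)) := by positivity
      push_cast
      field_simp
    rw [h1, Finset.prod_congr rfl h3, h4, h2, ← mul_assoc, h5, mul_assoc]
  -- key identities
  have key1 : μ {ω | Y ω = y} = ∫⁻ ω, ENNReal.ofReal (G y (U ω)) ∂μ := by
    have := hkey' y Set.univ MeasurableSet.univ
    simpa using this
  have key2 : μ {ω | Y ω = y'}
      = ∫⁻ ω, ENNReal.ofReal (G (y') (U ω)) ∂μ := by
    have := hkey' (y') Set.univ MeasurableSet.univ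
    simpa using this
  -- multiply key2 by k
  have keyB : ENNReal.ofReal k * μ {ω | Y ω = y'}
      = ∫⁻ ω, ENNReal.ofReal (G y (U ω)) * ENNReal.ofReal (U ω i) ∂μ := by
    have hm1 : Measurable fun ω => ENNReal.ofReal (G y' (U ω)) :=
      ((hGmeas y').comp hU).ennreal_ofReal
    rw [key2, ← lintegral_const_mul _ hm1]
    refine lintegral_congr fun ω => ?_
    rw [← ENNReal.ofReal_mul hkpos.le, hpt (U ω), ENNReal.ofReal_mul (hU0 ω i), mul_comm]
  -- conditional expectation identity
  have keyA : ∫⁻ ω in {ω | Y ω = y}, ENNReal.ofReal (U ω i) ∂μ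
      = ∫⁻ ω, ENNReal.ofReal (G y (U ω)) * ENNReal.ofReal (U ω i) ∂μ := by
    exact htrans y (fun u => ENNReal.ofReal (u i))
      ((measurable_pi_apply i).ennreal_ofReal)
  have hint : ∫ ω in {ω | Y ω = y}, U ω i ∂μ
      = (∫⁻ ω in {ω | Y ω = y}, ENNReal.ofReal (U ω i) ∂μ).toReal := by
    apply integral_eq_lintegral_of_nonneg_ae
    · exact Filter.Eventually.of_forall fun ω => hU0 ω i
    · exact ((measurable_pi_apply i).comp hU).aestronglyMeasurable
  have hce := hlin y hne i
  rw [condExpEvent] at hce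
  have hA : (∫⁻ ω in {ω | Y ω = y}, ENNReal.ofReal (U ω i) ∂μ).toReal
      = L * (μ {ω | Y ω = y}).toReal := by
    rw [← hint]
    rw [div_eq_iff hpos.ne'] at hce
    exact hce
  have hB : (ENNReal.ofReal k * μ {ω | Y ω = y'}).toReal
      = k * (μ {ω | Y ω = y'}).toReal := by
    rw [ENNReal.toReal_mul, ENNReal.toReal_ofReal hkpos.le]
  have hmain : k * (μ {ω | Y ω = y'}).toReal
      = L * (μ {ω | Y ω = y}).toReal := by
    rw [← hB, keyB, ← keyA, hA]
  rw [div_eq_div_iff hpos.ne' hkpos.ne']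
  linarith [hmain]
end
end

section
/- Let A ∈ ℝ^{n×n} satisfy xᵀAx > 0 for every nonzero x ∈ ℝ^n (so that A + diag(s) is invertible for every s in the nonnegative orthant), and let b ∈ ℝ^n have all entries strictly positive. Suppose g : ℝ^n_{≥0} → ℝ is twice continuously differentiable, g(0) = 0, and ∇g(s) = −(A + diag(s))^{−1} b for every s in the nonnegative orthant. Then A is a diagonal matrix with strictly positive diagonal entries A_11, …, A_nn, and g(s) = −Σ_{i=1}^n b_i · log(1 + s_i / A_ii) for all s in the nonnegative orthant. -/
noncomputable section

open Matrix Set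

attribute [local instance] Matrix.linftyOpNormedRing Matrix.linftyOpNormedAlgebra
  Matrix.linftyOpNormedSpace

namespace Stmt11Aux

variable {n : ℕ}

lemma clm_pi_zero (L : (Fin n → ℝ) →L[ℝ] ℝ) (h : ∀ j, L (Pi.single j 1) = 0) : L = 0 := by
  apply ContinuousLinearMap.coe_injective
  apply LinearMap.pi_ext'
  intro i
  apply LinearMap.ext_ring
  simpa using h i

/-- the diagonal embedding as a continuous linear map -/
def diagCLM (n : ℕ) : (Fin n → ℝ) →L[ℝ] Matrix (Fin n) (Fin n) ℝ :=
  LinearMap.toContinuousLinearMap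
    { toFun := Matrix.diagonal
      map_add' := fun x y => by simp [Matrix.diagonal_add]
      map_smul' := fun c x => by simp [Matrix.diagonal_smul] }

@[simp] lemma diagCLM_apply (x : Fin n → ℝ) : diagCLM n x = Matrix.diagonal x := rfl

/-- evaluation `N ↦ (N *ᵥ b) j` as a continuous linear map -/
def evalCLM (b : Fin n → ℝ) (j : Fin n) : Matrix (Fin n) (Fin n) ℝ →L[ℝ] ℝ :=
  LinearMap.toContinuousLinearMap
    { toFun := fun N => N.mulVec b j
      map_add' := fun x y => by simp [Matrix.add_mulVec]
      map_smul' := fun c x => by simp [Matrix.smul_mulVec] }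

@[simp] lemma evalCLM_apply (b : Fin n → ℝ) (j : Fin n) (N : Matrix (Fin n) (Fin n) ℝ) :
    evalCLM b j N = N.mulVec b j := rfl

lemma hasFDerivAt_inv_entry (A : Matrix (Fin n) (Fin n) ℝ) (b : Fin n → ℝ)
    (s₀ : Fin n → ℝ) (hM : IsUnit (A + Matrix.diagonal s₀)) (j : Fin n) :
    ∃ L : (Fin n → ℝ) →L[ℝ] ℝ,
      HasFDerivAt (fun s => ((A + Matrix.diagonal s)⁻¹).mulVec b j) L s₀ ∧
      ∀ i, L (Pi.single i 1) =
        -((A + Matrix.diagonal s₀)⁻¹ j i * ((A + Matrix.diagonal s₀)⁻¹.mulVec b i)) := by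
  haveI : CompleteSpace (Matrix (Fin n) (Fin n) ℝ) := FiniteDimensional.complete ℝ _
  obtain ⟨u, hu⟩ := hM
  have haff : HasFDerivAt (fun s : Fin n → ℝ => A + Matrix.diagonal s) (diagCLM n) s₀ := by
    exact ((diagCLM n).hasFDerivAt (x := s₀)).const_add A
  have hinv : HasFDerivAt (fun s : Fin n → ℝ => Ring.inverse (A + Matrix.diagonal s))
      ((-(ContinuousLinearMap.mulLeftRight ℝ _ ↑u⁻¹ ↑u⁻¹)).comp (diagCLM n)) s₀ := by
    have h1 := hasFDerivAt_ringInverse (𝕜 := ℝ) u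
    rw [hu] at h1
    exact h1.comp s₀ haff
  refine ⟨((evalCLM b j).comp ((-(ContinuousLinearMap.mulLeftRight ℝ _ ↑u⁻¹ ↑u⁻¹)).comp
      (diagCLM n))), ?_, ?_⟩
  · have : (fun s : Fin n → ℝ => ((A + Matrix.diagonal s)⁻¹).mulVec b j)
        = fun s => evalCLM b j (Ring.inverse (A + Matrix.diagonal s)) := by
      funext s
      simp [Matrix.nonsing_inv_eq_ringInverse]
    rw [this]
    exact ((evalCLM b j).hasFDerivAt).comp s₀ hinv
  · intro i
    have hui : (↑u⁻¹ : Matrix (Fin n) (Fin n) ℝ) = (A + Matrix.diagonal s₀)⁻¹ := by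
      rw [Matrix.coe_units_inv, hu]
    simp only [ContinuousLinearMap.comp_apply, diagCLM_apply, ContinuousLinearMap.neg_apply,
      ContinuousLinearMap.mulLeftRight_apply, evalCLM_apply, hui]
    set B := (A + Matrix.diagonal s₀)⁻¹
    have : (B * Matrix.diagonal (Pi.single i 1) * B).mulVec b j = B j i * B.mulVec b i := by
      rw [Matrix.mul_assoc, ← Matrix.mulVec_mulVec, ← Matrix.mulVec_mulVec]
      have hd : (Matrix.diagonal (Pi.single i 1)).mulVec (B.mulVec b)
          = Pi.single i (B.mulVec b i) := by
        funext k
        rw [Matrix.mulVec_diagonal]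
        by_cases hk : k = i
        · subst hk; simp
        · simp [Pi.single_eq_of_ne hk]
      rw [hd, Matrix.mulVec_single]
      simp
    change ((-(B * Matrix.diagonal (Pi.single i 1) * B)).mulVec b) j = _
    rw [Matrix.neg_mulVec]
    simp [this]

end Stmt11Aux

open Stmt11Aux in
set_option maxHeartbeats 1000000 in
/-- if `xᵀAx > 0` for all nonzero `x`, `b` has positive entries, `g` is twice
continuously differentiable on the nonnegative orthant with `g(0) = 0` and
`∇g(s) = -(A + diag(s))⁻¹ b` there, then `A` is diagonal with positive diagonal entries and
`g(s) = -∑ i, b i * log (1 + s i / A i i)` on the orthant. -/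
theorem stmt11 {n : ℕ} (A : Matrix (Fin n) (Fin n) ℝ) (b : Fin n → ℝ)
    (hA : ∀ x : Fin n → ℝ, x ≠ 0 → 0 < dotProduct x (A.mulVec x))
    (hb : ∀ i, 0 < b i)
    (g : (Fin n → ℝ) → ℝ)
    (hg : ContDiffOn ℝ 2 g {s : Fin n → ℝ | ∀ i, 0 ≤ s i})
    (hg0 : g 0 = 0)
    (hgrad : ∀ s : Fin n → ℝ, (∀ i, 0 ≤ s i) → ∀ j : Fin n,
      fderivWithin ℝ g {s : Fin n → ℝ | ∀ i, 0 ≤ s i} s (Pi.single j 1)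
        = -(((A + Matrix.diagonal s)⁻¹).mulVec b) j) :
    (A = Matrix.diagonal fun i => A i i)
      ∧ (∀ i, 0 < A i i)
      ∧ (∀ s : Fin n → ℝ, (∀ i, 0 ≤ s i) →
          g s = -∑ i, b i * Real.log (1 + s i / A i i)) := by
  rcases Nat.eq_zero_or_pos n with hn | hn
  · subst hn
    refine ⟨?_, fun i => i.elim0, fun s hs => ?_⟩
    · ext i j; exact i.elim0
    · have hs0 : s = 0 := Subsingleton.elim _ _
      rw [hs0, hg0, Finset.univ_eq_empty, Finset.sum_empty, neg_zero]
  haveI : Nonempty (Fin n) := ⟨⟨0, hn⟩⟩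
  set S : Set (Fin n → ℝ) := {s : Fin n → ℝ | ∀ i, 0 ≤ s i} with hSdef
  -- basic structure of S
  have hSIci : S = Set.Ici (0 : Fin n → ℝ) := by
    ext s; simp [hSdef, Set.mem_Ici, Pi.le_def]
  have hconv : Convex ℝ S := hSIci ▸ convex_Ici _
  have hones : (fun _ : Fin n => (1:ℝ)) ∈ interior S := by
    have hopen : IsOpen {s : Fin n → ℝ | ∀ i, 0 < s i} := by
      have : {s : Fin n → ℝ | ∀ i, 0 < s i} = ⋂ i, (fun s : Fin n → ℝ => s i) ⁻¹' Set.Ioi 0 := by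
        ext s; simp
      rw [this]
      exact isOpen_iInter_of_finite fun i => (isOpen_Ioi).preimage (continuous_apply i)
    have hsub : {s : Fin n → ℝ | ∀ i, 0 < s i} ⊆ S := fun s hs i => (hs i).le
    exact interior_maximal hsub hopen (by intro i; norm_num)
  have hU : UniqueDiffOn ℝ S := uniqueDiffOn_convex hconv ⟨_, hones⟩
  have hclos : ∀ s ∈ S, s ∈ closure (interior S) := by
    intro s hs
    have hopen : IsOpen {x : Fin n → ℝ | ∀ i, 0 < x i} := by
      have : {x : Fin n → ℝ | ∀ i, 0 < x i} = ⋂ i, (fun x : Fin n → ℝ => x i) ⁻¹' Set.Ioi 0 := by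
        ext x; simp
      rw [this]
      exact isOpen_iInter_of_finite fun i => (isOpen_Ioi).preimage (continuous_apply i)
    have hsub : {x : Fin n → ℝ | ∀ i, 0 < x i} ⊆ interior S :=
      interior_maximal (fun x hx i => (hx i).le) hopen
    apply closure_mono hsub ?_
    have htend : Filter.Tendsto (fun k : ℕ => s + ((k:ℝ)+1)⁻¹ • (fun _ : Fin n => (1:ℝ)))
        Filter.atTop (nhds s) := by
      have h0 : Filter.Tendsto (fun k : ℕ => ((k:ℝ)+1)⁻¹) Filter.atTop (nhds 0) := by
        simpa [one_div] using tendsto_one_div_add_atTop_nhds_zero_nat (𝕜 := ℝ)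
      have := (h0.smul_const (fun _ : Fin n => (1:ℝ))).const_add s
      simpa using this
    refine mem_closure_of_tendsto htend ?_
    filter_upwards with k i
    have : (0:ℝ) < ((k:ℝ)+1)⁻¹ := by positivity
    simpa using add_pos_of_nonneg_of_pos (hs i) this
  -- invertibility
  have hposM : ∀ s ∈ S, ∀ x : Fin n → ℝ, x ≠ 0 →
      0 < dotProduct x ((A + Matrix.diagonal s).mulVec x) := by
    intro s hs x hx
    rw [Matrix.add_mulVec, dotProduct_add]
    have h2 : 0 ≤ dotProduct x ((Matrix.diagonal s).mulVec x) := by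
      rw [dotProduct]
      apply Finset.sum_nonneg
      intro i _
      rw [Matrix.mulVec_diagonal]
      have := hs i
      nlinarith [sq_nonneg (x i)]
    linarith [hA x hx]
  have hunit : ∀ s ∈ S, IsUnit (A + Matrix.diagonal s) := by
    intro s hs
    rw [← Matrix.mulVec_injective_iff_isUnit]
    intro x y hxy
    by_contra hne
    have hz : (A + Matrix.diagonal s).mulVec (x - y) = 0 := by
      rw [Matrix.mulVec_sub, hxy, sub_self]
    have := hposM s hs (x - y) (sub_ne_zero.2 hne)
    rw [hz] at this
    simp [dotProduct_zero] at this
  have hMv : ∀ s ∈ S, (A + Matrix.diagonal s).mulVec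
      (((A + Matrix.diagonal s)⁻¹).mulVec b) = b := by
    intro s hs
    rw [Matrix.mulVec_mulVec, Matrix.mul_nonsing_inv _
      ((Matrix.isUnit_iff_isUnit_det _).1 (hunit s hs)), Matrix.one_mulVec]
  -- coercivity constant
  have hcoer : ∃ c : ℝ, 0 < c ∧ ∀ x : Fin n → ℝ,
      c * ‖x‖^2 ≤ dotProduct x (A.mulVec x) := by
    have hQcont : Continuous fun x : Fin n → ℝ => dotProduct x (A.mulVec x) := by
      simp only [dotProduct, Matrix.mulVec]
      exact continuous_finset_sum _ fun i _ => (continuous_apply i).mul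
        (continuous_finset_sum _ fun j _ => continuous_const.mul (continuous_apply j))
    have hsphne : (Metric.sphere (0 : Fin n → ℝ) 1).Nonempty := by
      refine ⟨fun _ => 1, ?_⟩
      rw [mem_sphere_zero_iff_norm]
      simpa using (Pi.norm_const (ι := Fin n) (1:ℝ))
    obtain ⟨x₀, hx₀mem, hx₀min'⟩ := (isCompact_sphere (0 : Fin n → ℝ) 1).exists_isMinOn
      hsphne hQcont.continuousOn
    have hx₀min : ∀ y ∈ Metric.sphere (0 : Fin n → ℝ) 1,
        dotProduct x₀ (A.mulVec x₀) ≤ dotProduct y (A.mulVec y) := fun y hy => hx₀min' hy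
    have hx₀ : x₀ ≠ 0 := by
      intro h
      rw [mem_sphere_zero_iff_norm, h] at hx₀mem
      simp at hx₀mem
    refine ⟨_, hA x₀ hx₀, fun x => ?_⟩
    by_cases hx : x = 0
    · simp [hx]
    · have hr : (0:ℝ) < ‖x‖ := norm_pos_iff.2 hx
      set y : Fin n → ℝ := ‖x‖⁻¹ • x with hy
      have hyn : ‖y‖ = 1 := by
        rw [hy, norm_smul, norm_inv, norm_norm, inv_mul_cancel₀ hr.ne']
      have hxy : x = ‖x‖ • y := by rw [hy, smul_inv_smul₀ hr.ne']
      have hQx : dotProduct x (A.mulVec x)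
          = ‖x‖^2 * dotProduct y (A.mulVec y) := by
        conv_lhs => rw [hxy]
        rw [Matrix.mulVec_smul, smul_dotProduct, dotProduct_smul]
        simp only [smul_eq_mul]; ring
      have hmin := hx₀min y (by rwa [mem_sphere_zero_iff_norm])
      rw [hQx]
      have h2 : (0:ℝ) < ‖x‖^2 := by positivity
      nlinarith
  -- symmetry of the second derivative gives the key relation
  have hsymB : ∀ s₀, s₀ ∈ S → ∀ i j : Fin n,
      (A + Matrix.diagonal s₀)⁻¹ j i * (((A + Matrix.diagonal s₀)⁻¹).mulVec b) i
        = (A + Matrix.diagonal s₀)⁻¹ i j * (((A + Matrix.diagonal s₀)⁻¹).mulVec b) j := by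
    intro s₀ hs₀ i j
    obtain ⟨Li, hLi, hLival⟩ := Stmt11Aux.hasFDerivAt_inv_entry A b s₀ (hunit s₀ hs₀) i
    obtain ⟨Lj, hLj, hLjval⟩ := Stmt11Aux.hasFDerivAt_inv_entry A b s₀ (hunit s₀ hs₀) j
    have hsymm : IsSymmSndFDerivWithinAt ℝ g S s₀ :=
      (hg s₀ hs₀).isSymmSndFDerivWithinAt (by simp) hU (hclos s₀ hs₀) hs₀
    have hΦdiff : DifferentiableWithinAt ℝ (fderivWithin ℝ g S) S s₀ := by
      have := (hg.fderivWithin hU (by norm_num : (1:WithTop ℕ∞) + 1 ≤ 2)).differentiableOn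
        one_ne_zero
      exact this s₀ hs₀
    have key : ∀ (k : Fin n) (Lk : (Fin n → ℝ) →L[ℝ] ℝ),
        HasFDerivAt (fun s => ((A + Matrix.diagonal s)⁻¹).mulVec b k) Lk s₀ →
        ∀ m, fderivWithin ℝ (fderivWithin ℝ g S) S s₀ (Pi.single m 1) (Pi.single k 1)
          = - Lk (Pi.single m 1) := by
      intro k Lk hLk m
      have h1 := (ContinuousLinearMap.apply ℝ ℝ (Pi.single k 1)).hasFDerivAt.comp_hasFDerivWithinAt
        s₀ hΦdiff.hasFDerivWithinAt
      have h2 : fderivWithin ℝ (⇑(ContinuousLinearMap.apply ℝ ℝ (Pi.single k 1)) ∘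
            fderivWithin ℝ g S) S s₀
          = (ContinuousLinearMap.apply ℝ ℝ (Pi.single k 1)).comp
              (fderivWithin ℝ (fderivWithin ℝ g S) S s₀) :=
        h1.fderivWithin (hU s₀ hs₀)
      have h3 : fderivWithin ℝ (⇑(ContinuousLinearMap.apply ℝ ℝ (Pi.single k 1)) ∘
            fderivWithin ℝ g S) S s₀
          = fderivWithin ℝ (fun y => -(((A + Matrix.diagonal y)⁻¹).mulVec b k)) S s₀ := by
        apply fderivWithin_congr
        · intro y hy
          simpa [Function.comp] using hgrad y hy k
        · simpa [Function.comp] using hgrad s₀ hs₀ k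
      have h4 : fderivWithin ℝ (fun y => -(((A + Matrix.diagonal y)⁻¹).mulVec b k)) S s₀
          = -Lk := (hLk.neg.hasFDerivWithinAt.fderivWithin (hU s₀ hs₀))
      have := congrArg (fun L : (Fin n → ℝ) →L[ℝ] ℝ => L (Pi.single m 1)) (h2.symm.trans (h3.trans h4))
      simpa using this
    have e1 := key j Lj hLj i
    have e2 := key i Li hLi j
    have := hsymm (Pi.single i 1) (Pi.single j 1)
    rw [e1, e2] at this
    have h5 := hLjval i
    have h6 := hLival j
    rw [h5, h6] at this
    linarith
  -- entrywise relation for the off-diagonal entries of A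
  have hrel : ∀ s, s ∈ S → ∀ i j : Fin n, i ≠ j →
      A i j * (((A + Matrix.diagonal s)⁻¹).mulVec b) j
        = A j i * (((A + Matrix.diagonal s)⁻¹).mulVec b) i := by
    intro s hs i j hij
    set M := A + Matrix.diagonal s with hM
    set B := M⁻¹ with hB
    set v := B.mulVec b with hv
    have hdet : IsUnit M.det := (Matrix.isUnit_iff_isUnit_det _).1 (hunit s hs)
    have hMB : M * B = 1 := Matrix.mul_nonsing_inv _ hdet
    have hKsymm : (B * Matrix.diagonal v)ᵀ = B * Matrix.diagonal v := by
      ext i' j'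
      rw [Matrix.transpose_apply, Matrix.mul_diagonal, Matrix.mul_diagonal]
      exact hsymB s hs i' j'
    have hmain : Matrix.diagonal v * Mᵀ = M * Matrix.diagonal v := by
      have h1 : M * (B * Matrix.diagonal v) * Mᵀ = Matrix.diagonal v * Mᵀ := by
        rw [← Matrix.mul_assoc, hMB, Matrix.one_mul]
      have h2 : M * (B * Matrix.diagonal v)ᵀ * Mᵀ = M * Matrix.diagonal v := by
        rw [Matrix.transpose_mul, Matrix.diagonal_transpose, Matrix.mul_assoc,
          Matrix.mul_assoc, ← Matrix.transpose_mul, hMB]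
        simp
      rw [← h1, ← h2, hKsymm]
    have := congrArg (fun N : Matrix (Fin n) (Fin n) ℝ => N i j) hmain
    simp only [Matrix.mul_apply] at this
    rw [← Matrix.mul_apply, ← Matrix.mul_apply, Matrix.diagonal_mul, Matrix.mul_diagonal] at this
    have hMij : M i j = A i j := by
      rw [hM]; simp [Matrix.diagonal_apply_ne _ hij]
    have hMji : M j i = A j i := by
      rw [hM]; simp [Matrix.diagonal_apply_ne _ (Ne.symm hij)]
    rw [Matrix.transpose_apply] at this
    rw [hMij, hMji] at this
    linarith
  -- positivity of the diagonal
  have hApos : ∀ i, 0 < A i i := by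
    intro i
    have hne : (Pi.single i 1 : Fin n → ℝ) ≠ 0 := by
      intro h
      have := congrFun h i
      simp at this
    have h := hA (Pi.single i 1) hne
    rw [single_dotProduct, Matrix.mulVec_single] at h
    simpa using h
  obtain ⟨c, hc, hcoer'⟩ := hcoer
  -- off-diagonal entries vanish
  have hoffd : ∀ i k : Fin n, i ≠ k → A k i = 0 := by
    intro i k hik
    set Sb : ℝ := ∑ j, |b j| with hSb
    have hSbpos : 0 < Sb := by
      apply Finset.sum_pos (fun j _ => abs_pos.2 (hb j).ne') ⟨i, Finset.mem_univ i⟩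
    set Cb : ℝ := Sb / c with hCb
    have hCbpos : 0 < Cb := div_pos hSbpos hc
    set CA : ℝ := ∑ p, ∑ q, |A p q| with hCA
    have hCAnn : 0 ≤ CA := Finset.sum_nonneg fun p _ => Finset.sum_nonneg fun q _ => abs_nonneg _
    have hrowA : ∀ p, (∑ q, |A p q|) ≤ CA := by
      intro p
      exact Finset.single_le_sum (f := fun p => ∑ q, |A p q|)
        (fun r _ => Finset.sum_nonneg fun q _ => abs_nonneg _) (Finset.mem_univ p)
    set C' : ℝ := Sb + CA * Cb with hC'
    have hC'pos : 0 < C' := by positivity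
    set D : ℝ := CA * C' with hD
    have hDnn : 0 ≤ D := by positivity
    set β : ℝ := b i / (2 * A i i) with hβ
    have hβpos : 0 < β := div_pos (hb i) (by linarith [hApos i])
    -- main estimate for every large T
    have hmain : ∀ T : ℝ, 1 ≤ T → 2 * D / b i ≤ T → T * (|A k i| * β) ≤ |A i k| * C' := by
      intro T hT1 hT2
      have hTpos : (0:ℝ) < T := lt_of_lt_of_le one_pos hT1
      set sT : Fin n → ℝ := fun j => if j = i then 0 else T with hsT
      have hsTS : sT ∈ S := by
        intro j
        by_cases hj : j = i <;> simp [hsT, hj, hTpos.le]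
      set u : Fin n → ℝ := ((A + Matrix.diagonal sT)⁻¹).mulVec b with hu
      have hcomp : ∀ j, A.mulVec u j + sT j * u j = b j := by
        intro j
        have := congrFun (hMv sT hsTS) j
        rw [← hu] at this
        rw [← this, Matrix.add_mulVec]
        simp [Matrix.mulVec_diagonal]
      -- uniform bound on u
      have hub : ∀ j, |u j| ≤ Cb := by
        have hnu : ‖u‖ ≤ Cb := by
          have hq : dotProduct u (A.mulVec u) ≤ dotProduct u b := by
            have h1 : dotProduct u b
                = dotProduct u (A.mulVec u) + ∑ j, sT j * u j ^ 2 := by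
              rw [dotProduct, dotProduct]
              rw [← Finset.sum_add_distrib]
              apply Finset.sum_congr rfl
              intro j _
              rw [← hcomp j]; ring
            have h2 : 0 ≤ ∑ j, sT j * u j ^ 2 := by
              apply Finset.sum_nonneg
              intro j _
              exact mul_nonneg (hsTS j) (sq_nonneg _)
            linarith
          have hq2 : dotProduct u b ≤ ‖u‖ * Sb := by
            rw [dotProduct, hSb, Finset.mul_sum]
            apply Finset.sum_le_sum
            intro j _
            calc u j * b j ≤ |u j * b j| := le_abs_self _
              _ = |u j| * |b j| := abs_mul _ _
              _ ≤ ‖u‖ * |b j| := by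
                  have := norm_le_pi_norm u j
                  exact mul_le_mul_of_nonneg_right (by simpa using this) (abs_nonneg _)
          have hcu := hcoer' u
          by_cases hu0 : ‖u‖ = 0
          · rw [hu0]; exact hCbpos.le
          · have hupos : 0 < ‖u‖ := lt_of_le_of_ne (norm_nonneg u) (Ne.symm hu0)
            rw [hCb, le_div_iff₀ hc]
            nlinarith [hcu, hq, hq2, hupos]
        intro j
        calc |u j| ≤ ‖u‖ := by simpa using norm_le_pi_norm u j
          _ ≤ Cb := hnu
      have hAu : ∀ p, |A.mulVec u p| ≤ CA * Cb := by
        intro p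
        rw [Matrix.mulVec, dotProduct]
        calc |∑ q, A p q * u q| ≤ ∑ q, |A p q * u q| := Finset.abs_sum_le_sum_abs _ _
          _ ≤ ∑ q, |A p q| * Cb := by
              apply Finset.sum_le_sum
              intro q _
              rw [abs_mul]
              exact mul_le_mul_of_nonneg_left (hub q) (abs_nonneg _)
          _ = (∑ q, |A p q|) * Cb := by rw [Finset.sum_mul]
          _ ≤ CA * Cb := mul_le_mul_of_nonneg_right (hrowA p) hCbpos.le
      -- coordinates other than i are small
      have hsmall : ∀ j, j ≠ i → T * |u j| ≤ C' := by
        intro j hj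
        have h1 := hcomp j
        rw [hsT] at h1
        simp only [hj, if_neg, ite_false] at h1
        have h2 : T * u j = b j - A.mulVec u j := by linarith
        have : |T * u j| ≤ |b j| + CA * Cb := by
          rw [h2]
          calc |b j - A.mulVec u j| ≤ |b j| + |A.mulVec u j| := abs_sub _ _
            _ ≤ |b j| + CA * Cb := by linarith [hAu j]
        rw [abs_mul, abs_of_pos hTpos] at this
        have hbj : |b j| ≤ Sb :=
          Finset.single_le_sum (f := fun j => |b j|) (fun r _ => abs_nonneg _) (Finset.mem_univ j)
        rw [hC']
        linarith
      -- coordinate i stays bounded below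
      have hui : β ≤ u i := by
        have h1 := hcomp i
        rw [hsT] at h1
        simp only [ite_true, if_pos] at h1
        have h2 : A.mulVec u i = b i := by simpa using h1
        have h3 : A i i * u i = b i - ∑ q ∈ Finset.univ.erase i, A i q * u q := by
          rw [Matrix.mulVec, dotProduct] at h2
          rw [← Finset.add_sum_erase _ _ (Finset.mem_univ i)] at h2
          linarith
        have h4 : |∑ q ∈ Finset.univ.erase i, A i q * u q| ≤ D / T := by
          calc |∑ q ∈ Finset.univ.erase i, A i q * u q|
              ≤ ∑ q ∈ Finset.univ.erase i, |A i q * u q| := Finset.abs_sum_le_sum_abs _ _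
            _ ≤ ∑ q ∈ Finset.univ.erase i, |A i q| * (C' / T) := by
                apply Finset.sum_le_sum
                intro q hq
                rw [abs_mul]
                have hqne : q ≠ i := Finset.ne_of_mem_erase hq
                have := hsmall q hqne
                have : |u q| ≤ C' / T := by
                  rw [le_div_iff₀ hTpos]; linarith [hsmall q hqne]
                exact mul_le_mul_of_nonneg_left this (abs_nonneg _)
            _ = (∑ q ∈ Finset.univ.erase i, |A i q|) * (C' / T) := by rw [Finset.sum_mul]
            _ ≤ CA * (C' / T) := by
                apply mul_le_mul_of_nonneg_right _ (by positivity)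
                calc (∑ q ∈ Finset.univ.erase i, |A i q|) ≤ ∑ q, |A i q| :=
                      Finset.sum_le_sum_of_subset_of_nonneg (Finset.erase_subset _ _)
                        (fun q _ _ => abs_nonneg _)
                  _ ≤ CA := hrowA i
            _ = D / T := by rw [hD]; ring
        have h5 : D / T ≤ b i / 2 := by
          rw [div_le_iff₀ hTpos]
          rw [div_le_iff₀ (hb i)] at hT2
          nlinarith [hb i]
        have h6 : b i / 2 ≤ A i i * u i := by
          have := abs_le.1 h4
          linarith [this.2]
        rw [hβ, div_le_iff₀ (by linarith [hApos i] : (0:ℝ) < 2 * A i i)]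
        nlinarith [hApos i]
      -- use the relation
      have h7 := hrel sT hsTS i k hik
      rw [← hu] at h7
      have h8 : |A k i| * u i ≤ |A i k| * |u k| := by
        calc |A k i| * u i ≤ |A k i| * |u i| :=
              mul_le_mul_of_nonneg_left (le_abs_self _) (abs_nonneg _)
          _ = |A k i * u i| := (abs_mul _ _).symm
          _ = |A i k * u k| := by rw [← h7]
          _ = |A i k| * |u k| := abs_mul _ _
      have h9 : T * (|A i k| * |u k|) ≤ |A i k| * C' := by
        have := hsmall k (Ne.symm hik)
        calc T * (|A i k| * |u k|) = |A i k| * (T * |u k|) := by ring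
          _ ≤ |A i k| * C' := mul_le_mul_of_nonneg_left this (abs_nonneg _)
      calc T * (|A k i| * β) ≤ T * (|A k i| * u i) := by
            apply mul_le_mul_of_nonneg_left _ hTpos.le
            exact mul_le_mul_of_nonneg_left hui (abs_nonneg _)
        _ ≤ T * (|A i k| * |u k|) := by
            apply mul_le_mul_of_nonneg_left h8 hTpos.le
        _ ≤ |A i k| * C' := h9
    -- conclude
    by_contra hne
    have habs : 0 < |A k i| * β := mul_pos (abs_pos.2 hne) hβpos
    set T : ℝ := max (max 1 (2 * D / b i)) ((|A i k| * C' + 1) / (|A k i| * β)) with hT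
    have h1 : 1 ≤ T := le_trans (le_max_left _ _) (le_max_left _ _)
    have h2 : 2 * D / b i ≤ T := le_trans (le_max_right _ _) (le_max_left _ _)
    have h3 : (|A i k| * C' + 1) / (|A k i| * β) ≤ T := le_max_right _ _
    have h4 := hmain T h1 h2
    rw [div_le_iff₀ habs] at h3
    linarith
  -- A is diagonal
  have hdiag : A = Matrix.diagonal fun i => A i i := by
    ext p q
    by_cases h : p = q
    · subst h; simp
    · rw [Matrix.diagonal_apply_ne _ h]
      exact hoffd q p (Ne.symm h)
  refine ⟨hdiag, hApos, fun s hs => ?_⟩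
  -- inverse of the diagonal matrix
  have hvd : ∀ s₀ ∈ S, ∀ j, (((A + Matrix.diagonal s₀)⁻¹).mulVec b) j
      = b j / (A j j + s₀ j) := by
    intro s₀ hs₀ j
    have hMd : A + Matrix.diagonal s₀ = Matrix.diagonal (fun i => A i i + s₀ i) := by
      conv_lhs => rw [hdiag]
      rw [Matrix.diagonal_add]
    have hinv : (A + Matrix.diagonal s₀)⁻¹
        = Matrix.diagonal (fun i => (A i i + s₀ i)⁻¹) := by
      apply Matrix.inv_eq_right_inv
      rw [hMd, Matrix.diagonal_mul_diagonal]
      have : (fun i => (A i i + s₀ i) * (A i i + s₀ i)⁻¹) = fun _ => (1:ℝ) := by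
        funext i
        exact mul_inv_cancel₀ (by have := hApos i; have := hs₀ i; positivity)
      rw [this, Matrix.diagonal_one]
    rw [hinv, Matrix.mulVec_diagonal]
    rw [inv_mul_eq_div]
  -- derivative of the explicit antiderivative
  have hGd : ∀ s₀ ∈ S, HasFDerivAt (fun s : Fin n → ℝ => ∑ i, b i * Real.log (1 + s i / A i i))
      (∑ i : Fin n, (b i / (A i i + s₀ i)) • (ContinuousLinearMap.proj i :
        (Fin n → ℝ) →L[ℝ] ℝ)) s₀ := by
    intro s₀ hs₀
    apply HasFDerivAt.fun_sum
    intro i _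
    have hAi := hApos i
    have hsi := hs₀ i
    have h1 : HasDerivAt (fun t : ℝ => 1 + t / A i i) (1 / A i i) (s₀ i) := by
      simpa using ((hasDerivAt_id (s₀ i)).div_const (A i i)).const_add 1
    have hx0 : (0:ℝ) < 1 + s₀ i / A i i := by positivity
    have h2 : HasDerivAt (fun t : ℝ => Real.log (1 + t / A i i))
        ((1 + s₀ i / A i i)⁻¹ * (1 / A i i)) (s₀ i) :=
      by have := (Real.hasDerivAt_log hx0.ne').comp (s₀ i) h1; exact this
    have h3 : HasDerivAt (fun t : ℝ => b i * Real.log (1 + t / A i i))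
        (b i / (A i i + s₀ i)) (s₀ i) := by
      have := h2.const_mul (b i)
      rw [show b i / (A i i + s₀ i) = b i * ((1 + s₀ i / A i i)⁻¹ * (1 / A i i)) by
        field_simp [hAi.ne']]
      exact this
    have h4 : HasFDerivAt (fun s : Fin n → ℝ => s i)
        (ContinuousLinearMap.proj i : (Fin n → ℝ) →L[ℝ] ℝ) s₀ :=
      (ContinuousLinearMap.proj (R := ℝ) (φ := fun _ : Fin n => ℝ) i).hasFDerivAt (x := s₀)
    have h5 := h3.comp_hasFDerivAt s₀ h4
    exact h5
  -- the function h = g + G has zero derivative on S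
  have hzero : ∀ s₀ ∈ S, fderivWithin ℝ
      (fun s => g s + ∑ i, b i * Real.log (1 + s i / A i i)) S s₀ = 0 := by
    intro s₀ hs₀
    have hgd : DifferentiableWithinAt ℝ g S s₀ :=
      (hg.differentiableOn (by norm_num)) s₀ hs₀
    have hGd' := hGd s₀ hs₀
    have hadd : fderivWithin ℝ (fun s => g s + ∑ i, b i * Real.log (1 + s i / A i i)) S s₀
        = fderivWithin ℝ g S s₀ + fderivWithin ℝ
            (fun s => ∑ i, b i * Real.log (1 + s i / A i i)) S s₀ :=
      fderivWithin_add (hU s₀ hs₀) hgd hGd'.differentiableAt.differentiableWithinAt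
    have hGfd : fderivWithin ℝ (fun s => ∑ i, b i * Real.log (1 + s i / A i i)) S s₀
        = ∑ i : Fin n, (b i / (A i i + s₀ i)) • (ContinuousLinearMap.proj i :
            (Fin n → ℝ) →L[ℝ] ℝ) :=
      hGd'.hasFDerivWithinAt.fderivWithin (hU s₀ hs₀)
    rw [hadd, hGfd]
    apply clm_pi_zero
    intro j
    rw [ContinuousLinearMap.add_apply, ContinuousLinearMap.sum_apply]
    have hval : (∑ i : Fin n, ((b i / (A i i + s₀ i)) • (ContinuousLinearMap.proj i :
        (Fin n → ℝ) →L[ℝ] ℝ)) (Pi.single j 1)) = b j / (A j j + s₀ j) := by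
      rw [Finset.sum_eq_single j]
      · simp
      · intro q _ hq
        simp [Pi.single_eq_of_ne hq]
      · intro h; exact absurd (Finset.mem_univ j) h
    rw [hval, hgrad s₀ hs₀ j, hvd s₀ hs₀ j]
    simp
  -- conclude by the mean value inequality
  have hdiffOn : DifferentiableOn ℝ
      (fun s => g s + ∑ i, b i * Real.log (1 + s i / A i i)) S := by
    intro x hx
    exact ((hg.differentiableOn (by norm_num)) x hx).add
      (hGd x hx).differentiableAt.differentiableWithinAt
  have h0S : (0 : Fin n → ℝ) ∈ S := fun i => le_refl 0
  have hbound : ∀ x ∈ S, ‖fderivWithin ℝ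
      (fun s => g s + ∑ i, b i * Real.log (1 + s i / A i i)) S x‖ ≤ 0 := by
    intro x hx
    rw [hzero x hx]
    simp
  have hmvt := hconv.norm_image_sub_le_of_norm_fderivWithin_le hdiffOn hbound h0S hs
  rw [zero_mul] at hmvt
  have h0 : g 0 + ∑ i, b i * Real.log (1 + (0: Fin n → ℝ) i / A i i) = 0 := by
    rw [hg0]
    simp
  have : g s + ∑ i, b i * Real.log (1 + s i / A i i) = 0 := by
    have := norm_le_zero_iff.1 hmvt
    rw [sub_eq_zero] at this
    rw [this, h0]
  linarith
end
end

section
/- Let U be a random vector taking values in the nonnegative orthant of ℝ^n with E[‖U‖] < ∞ and characteristic function φ_U(t) = E[e^{i tᵀU}]. Let α_1, …, α_n > 0 and θ_1, …, θ_n > 0, let φ_G(t) = Π_{k=1}^n (1 − i t_k/α_k)^{−θ_k} be the characteristic function of the product of independent gamma distributions with rates α_k and shapes θ_k, and set A = diag(1/α_1, …, 1/α_n) and c̃ = (θ_1/α_1, …, θ_n/α_n)ᵀ. Then for every t ∈ ℝ^n: |φ_U(t) − φ_G(t)| ≤ ‖t‖ · sup_{t' ∈ ℝ^n} ‖ (i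 I + A diag(t')) ∇φ_U(t') + c̃ φ_U(t') ‖. -/
open MeasureTheory ProbabilityTheory

noncomputable section

/-- Euclidean norm of a real vector. -/
def eNormR {n : ℕ} (v : Fin n → ℝ) : ℝ := Real.sqrt (∑ i, v i ^ 2)

/-- Euclidean norm of a complex vector. -/
def eNormC {n : ℕ} (v : Fin n → ℂ) : ℝ := Real.sqrt (∑ i, ‖v i‖ ^ 2)

/-- The characteristic function `φ_V(t) = E[e^{i tᵀ V}]` of a random vector `V`. -/
def charFunVec {Ω : Type} [MeasurableSpace Ω] (μ : Measure Ω) {n : ℕ}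
    (V : Ω → Fin n → ℝ) (t : Fin n → ℝ) : ℂ :=
  ∫ ω, Complex.exp (Complex.I * ((∑ k, t k * V ω k : ℝ) : ℂ)) ∂μ

/-- The gradient `∇φ_V(t) = E[i V e^{i tᵀ V}]` of the characteristic function of `V`
(valid when `E‖V‖ < ∞`). -/
def gradCharFunVec {Ω : Type} [MeasurableSpace Ω] (μ : Measure Ω) {n : ℕ}
    (V : Ω → Fin n → ℝ) (t : Fin n → ℝ) : Fin n → ℂ := fun j =>
  ∫ ω, Complex.I * (V ω j : ℂ) * Complex.exp (Complex.I * ((∑ k, t k * V ω k : ℝ) : ℂ)) ∂μ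

/-- The characteristic function `φ_G(t) = ∏ k, (1 - i t_k/α_k)^{-θ_k}` of the product of
independent gamma distributions with rates `α k` and shapes `θ k`. -/
def prodGammaCharFun {n : ℕ} (α θ : Fin n → ℝ) (t : Fin n → ℝ) : ℂ :=
  ∏ k, (1 - Complex.I * ((t k / α k : ℝ) : ℂ)) ^ (-(θ k : ℂ))

/- ---------- auxiliary lemmas ---------- -/

lemma stmt13_ptwise (r : ℝ) (x : ℝ) :
    HasDerivAt (fun x : ℝ => Complex.exp (Complex.I * ((x * r : ℝ) : ℂ)))
      (Complex.I * (r : ℂ) * Complex.exp (Complex.I * ((x * r : ℝ) : ℂ))) x := by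
  have h : HasDerivAt (fun y : ℂ => Complex.exp (Complex.I * (r : ℂ) * y))
      (Complex.exp (Complex.I * (r : ℂ) * (x : ℂ)) * (Complex.I * (r : ℂ))) (x : ℂ) :=
    by simpa using ((hasDerivAt_id (x : ℂ)).const_mul (Complex.I * (r : ℂ))).cexp
  have h2 := h.comp_ofReal
  have hfun : (fun y : ℝ => Complex.exp (Complex.I * (r : ℂ) * (y : ℂ)))
      = fun y : ℝ => Complex.exp (Complex.I * ((y * r : ℝ) : ℂ)) := by
    funext y; push_cast; ring_nf
  rw [hfun] at h2
  convert h2 using 1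
  push_cast; ring_nf

lemma stmt13_charLine_hasDerivAt {Ω : Type} [MeasurableSpace Ω] (μ : Measure Ω)
    [IsProbabilityMeasure μ]
    (r : Ω → ℝ) (hr : Measurable r) (hB : Integrable (fun ω => |r ω|) μ) (s : ℝ) :
    HasDerivAt (fun s : ℝ => ∫ ω, Complex.exp (Complex.I * ((s * r ω : ℝ) : ℂ)) ∂μ)
      (∫ ω, Complex.I * (r ω : ℂ) * Complex.exp (Complex.I * ((s * r ω : ℝ) : ℂ)) ∂μ) s := by
  have hmeas : ∀ x : ℝ,
      AEStronglyMeasurable (fun ω => Complex.exp (Complex.I * ((x * r ω : ℝ) : ℂ))) μ := by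
    intro x
    exact (Complex.measurable_exp.comp (measurable_const.mul
      (Complex.measurable_ofReal.comp (measurable_const.mul hr)))).aestronglyMeasurable
  have hnorm : ∀ x : ℝ, ∀ ω, ‖Complex.exp (Complex.I * ((x * r ω : ℝ) : ℂ))‖ = 1 := by
    intro x ω
    rw [Complex.norm_exp]
    simp [Complex.mul_re]
  have key := hasDerivAt_integral_of_dominated_loc_of_deriv_le (μ := μ)
    (F := fun x ω => Complex.exp (Complex.I * ((x * r ω : ℝ) : ℂ)))
    (F' := fun x ω => Complex.I * (r ω : ℂ) * Complex.exp (Complex.I * ((x * r ω : ℝ) : ℂ)))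
    (x₀ := s) (bound := fun ω => |r ω|) (s := Metric.ball s 1) (Metric.ball_mem_nhds s one_pos)
    (Filter.Eventually.of_forall fun x => hmeas x)
    (by
      refine (integrable_const (1 : ℝ)).mono' (hmeas s) ?_
      exact Filter.Eventually.of_forall fun ω => le_of_eq (hnorm s ω))
    (by
      exact ((measurable_const.mul (Complex.measurable_ofReal.comp hr)).mul
        (Complex.measurable_exp.comp (measurable_const.mul
          (Complex.measurable_ofReal.comp (measurable_const.mul hr))))).aestronglyMeasurable)
    (by
      refine Filter.Eventually.of_forall fun ω x _ => ?_
      rw [norm_mul, hnorm x ω, mul_one, norm_mul]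
      simp)
    hB
    (by
      refine Filter.Eventually.of_forall fun ω x _ => ?_
      exact stmt13_ptwise (r ω) x)
  exact key.2

/-- for a nonnegative random vector `U` with `E‖U‖ < ∞`, with
`A = diag(1/α₁, …, 1/αₙ)` and `c̃ = (θ₁/α₁, …, θₙ/αₙ)ᵀ`, for every `t`,
`|φ_U(t) - φ_G(t)| ≤ ‖t‖ ⬝ sup_{t'} ‖(i I + A diag(t')) ∇φ_U(t') + c̃ φ_U(t')‖`. -/
theorem stmt13 {Ω : Type} [MeasurableSpace Ω] (μ : Measure Ω) [IsProbabilityMeasure μ]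
    {n : ℕ} (U : Ω → Fin n → ℝ) (hU : Measurable U) (hUpos : ∀ ω i, 0 ≤ U ω i)
    (hint : Integrable (fun ω => eNormR (U ω)) μ)
    (α θ : Fin n → ℝ) (hα : ∀ i, 0 < α i) (hθ : ∀ i, 0 < θ i) :
    ∀ t : Fin n → ℝ, ∀ M : ℝ,
      (∀ t' : Fin n → ℝ,
        eNormC
          ((Complex.I • (1 : Matrix (Fin n) (Fin n) ℂ)
              + Matrix.diagonal (fun k => (((α k)⁻¹ : ℝ) : ℂ))
                * Matrix.diagonal (fun k => ((t' k : ℝ) : ℂ))).mulVec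
                  (gradCharFunVec μ U t')
            + fun j => ((θ j / α j : ℝ) : ℂ) * charFunVec μ U t') ≤ M) →
      ‖charFunVec μ U t - prodGammaCharFun α θ t‖ ≤ eNormR t * M := by
  intro t M hM
  classical
  -- notation
  set c : Fin n → ℝ := fun k => t k / α k with hc
  set z : ℝ → Fin n → ℂ := fun s k => 1 - Complex.I * ((s * c k : ℝ) : ℂ) with hzdef
  set r : Ω → ℝ := fun ω => ∑ k, t k * U ω k with hrdef
  set ψ : ℂ := prodGammaCharFun α θ t with hψdef
  set P : ℝ → ℂ := fun s => ∏ k, z s k ^ (θ k : ℂ) with hPdef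
  set φ : (Fin n → ℝ) → ℂ := charFunVec μ U with hφdef
  set G : (Fin n → ℝ) → Fin n → ℂ := gradCharFunVec μ U with hGdef
  -- measurability and integrability
  have hUmeas : ∀ k : Fin n, Measurable fun ω => U ω k :=
    fun k => (measurable_pi_apply k).comp hU
  have hrmeas : Measurable r := by
    apply Finset.measurable_sum
    intro k _
    exact measurable_const.mul (hUmeas k)
  have hUk : ∀ ω k, |U ω k| ≤ eNormR (U ω) := by
    intro ω k
    rw [eNormR, ← Real.sqrt_sq_eq_abs]
    exact Real.sqrt_le_sqrt (Finset.single_le_sum (f := fun i => U ω i ^ 2)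
      (fun i _ => sq_nonneg _) (Finset.mem_univ k))
  have hrbound : ∀ ω, |r ω| ≤ (∑ k, |t k|) * eNormR (U ω) := by
    intro ω
    calc |r ω| ≤ ∑ k, |t k * U ω k| := Finset.abs_sum_le_sum_abs _ _
      _ = ∑ k, |t k| * |U ω k| := by simp [abs_mul]
      _ ≤ ∑ k, |t k| * eNormR (U ω) :=
        Finset.sum_le_sum fun k _ => mul_le_mul_of_nonneg_left (hUk ω k) (abs_nonneg _)
      _ = _ := by rw [← Finset.sum_mul]
  have hrint : Integrable (fun ω => |r ω|) μ := by
    refine (hint.const_mul (∑ k, |t k|)).mono' hrmeas.abs.aestronglyMeasurable ?_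
    exact Filter.Eventually.of_forall fun ω => by
      rw [Real.norm_eq_abs, abs_abs]; exact hrbound ω
  -- basic facts about z
  have hzabs : ∀ s k, ‖z s k‖ = Real.sqrt (1 + (s * c k) ^ 2) := by
    intro s k
    rw [Complex.norm_def]
    congr 1
    simp [hzdef, Complex.normSq_apply]
    ring
  have h1z : ∀ s k, 1 ≤ ‖z s k‖ := by
    intro s k
    rw [hzabs]
    nlinarith [Real.sq_sqrt (by positivity : (0:ℝ) ≤ 1 + (s * c k) ^ 2),
      Real.sqrt_nonneg (1 + (s * c k) ^ 2), sq_nonneg (s * c k)]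
  have hzne : ∀ s k, z s k ≠ 0 := by
    intro s k h
    have := h1z s k
    rw [h] at this
    norm_num at this
    
  have hzslit : ∀ s k, z s k ∈ Complex.slitPlane := by
    intro s k
    rw [Complex.mem_slitPlane_iff]
    left
    simp [hzdef]
  have hzmono : ∀ s ∈ Set.Icc (0:ℝ) 1, ∀ k, ‖z s k‖ ≤ ‖z 1 k‖ := by
    intro s hs k
    rw [hzabs, hzabs]
    apply Real.sqrt_le_sqrt
    have h1 : s ^ 2 ≤ 1 := by nlinarith [hs.1, hs.2]
    nlinarith [sq_nonneg (c k)]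
  -- the line characteristic function
  have hsum : ∀ (s : ℝ) (ω : Ω), (∑ k, (s * t k) * U ω k) = s * r ω := by
    intro s ω
    rw [hrdef, Finset.mul_sum]
    exact Finset.sum_congr rfl fun k _ => by ring
  have hline : ∀ s : ℝ, φ (fun k => s * t k)
      = ∫ ω, Complex.exp (Complex.I * ((s * r ω : ℝ) : ℂ)) ∂μ := by
    intro s
    rw [hφdef]
    unfold charFunVec
    refine integral_congr_ae (Filter.Eventually.of_forall fun ω => ?_)
    simp only [hsum]
  have hgradline : ∀ (s : ℝ) (j : Fin n), G (fun k => s * t k) j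
      = ∫ ω, Complex.I * (U ω j : ℂ) * Complex.exp (Complex.I * ((s * r ω : ℝ) : ℂ)) ∂μ := by
    intro s j
    rw [hGdef]
    unfold gradCharFunVec
    refine integral_congr_ae (Filter.Eventually.of_forall fun ω => ?_)
    simp only [hsum]
  -- integrability of gradient integrands
  have hexpmeas : ∀ s : ℝ, Measurable fun ω => Complex.exp (Complex.I * ((s * r ω : ℝ) : ℂ)) :=
    fun s => Complex.measurable_exp.comp (measurable_const.mul
      (Complex.measurable_ofReal.comp (measurable_const.mul hrmeas)))
  have hgint : ∀ (s : ℝ) (j : Fin n), Integrable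
      (fun ω => Complex.I * (U ω j : ℂ) * Complex.exp (Complex.I * ((s * r ω : ℝ) : ℂ))) μ := by
    intro s j
    refine hint.mono' ?_ ?_
    · exact ((measurable_const.mul (Complex.measurable_ofReal.comp (hUmeas j))).mul
        (hexpmeas s)).aestronglyMeasurable
    · refine Filter.Eventually.of_forall fun ω => ?_
      rw [norm_mul, norm_mul]
      have : ‖Complex.exp (Complex.I * ((s * r ω : ℝ) : ℂ))‖ = 1 := by
        rw [Complex.norm_exp]
        simp [Complex.mul_re]
      rw [this, mul_one]
      simp only [Complex.norm_I, one_mul, Complex.norm_real, Real.norm_eq_abs]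
      exact hUk ω j
  -- derivative of the line char function, as a sum
  have hL : ∀ s : ℝ, HasDerivAt (fun s : ℝ => φ (fun k => s * t k))
      (∑ j, (t j : ℂ) * G (fun k => s * t k) j) s := by
    intro s
    have hfe : (fun s : ℝ => φ (fun k => s * t k))
        = fun s : ℝ => ∫ ω, Complex.exp (Complex.I * ((s * r ω : ℝ) : ℂ)) ∂μ :=
      funext hline
    rw [hfe]
    have hder := stmt13_charLine_hasDerivAt μ r hrmeas hrint s
    have hval : (∫ ω, Complex.I * (r ω : ℂ) * Complex.exp (Complex.I * ((s * r ω : ℝ) : ℂ)) ∂μ)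
        = ∑ j, (t j : ℂ) * G (fun k => s * t k) j := by
      have h1 : ∀ ω, Complex.I * (r ω : ℂ) * Complex.exp (Complex.I * ((s * r ω : ℝ) : ℂ))
          = ∑ j, (t j : ℂ) * (Complex.I * (U ω j : ℂ)
              * Complex.exp (Complex.I * ((s * r ω : ℝ) : ℂ))) := by
        intro ω
        have hr2 : ((r ω : ℝ) : ℂ) = ∑ k, (t k : ℂ) * (U ω k : ℂ) := by
          rw [hrdef]; push_cast; rfl
        rw [hr2, Finset.mul_sum, Finset.sum_mul]
        exact Finset.sum_congr rfl fun j _ => by ring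
      rw [integral_congr_ae (Filter.Eventually.of_forall h1)]
      rw [integral_finset_sum _ (fun j _ => (hgint s j).const_mul _)]
      refine Finset.sum_congr rfl fun j _ => ?_
      rw [integral_const_mul, hgradline s j]
    rw [← hval]
    exact hder
  -- derivative of P
  have hP : ∀ s : ℝ, HasDerivAt P
      (∑ j, (∏ k ∈ Finset.univ.erase j, z s k ^ (θ k : ℂ))
        • ((θ j : ℂ) * z s j ^ ((θ j : ℂ) - 1) * (-(Complex.I * (c j : ℂ))))) s := by
    intro s
    rw [hPdef]
    apply HasDerivAt.fun_finsetProd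
    intro j _
    have h1 : HasDerivAt (fun s : ℝ => ((s * c j : ℝ) : ℂ)) ((c j : ℝ) : ℂ) s :=
      (hasDerivAt_mul_const (c j)).ofReal_comp
    have h2 : HasDerivAt (fun s : ℝ => z s j) (-(Complex.I * (c j : ℂ))) s :=
      (h1.const_mul Complex.I).const_sub 1
    exact ((Complex.hasStrictDerivAt_cpow_const (hzslit s j)).hasDerivAt).comp s h2
  -- derivative of g
  set g : ℝ → ℂ := fun s => ψ * (φ (fun k => s * t k) * P s) with hgdef
  set g' : ℝ → ℂ := fun s => ψ * ((∑ j, (t j : ℂ) * G (fun k => s * t k) j) * P s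
      + φ (fun k => s * t k) * (∑ j, (∏ k ∈ Finset.univ.erase j, z s k ^ (θ k : ℂ))
        • ((θ j : ℂ) * z s j ^ ((θ j : ℂ) - 1) * (-(Complex.I * (c j : ℂ)))))) with hg'def
  have hg : ∀ s : ℝ, HasDerivAt g (g' s) s := by
    intro s
    exact ((hL s).mul (hP s)).const_mul ψ
  -- the key identity and bound
  have hbound : ∀ s ∈ Set.Icc (0:ℝ) 1, ‖g' s‖ ≤ eNormR t * M := by
    intro s hs
    set D : Fin n → ℂ := fun j =>
      (Complex.I + (((α j)⁻¹ * (s * t j) : ℝ) : ℂ)) * G (fun k => s * t k) j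
        + ((θ j / α j : ℝ) : ℂ) * φ (fun k => s * t k) with hDdef
    set Pe : Fin n → ℂ := fun j => ∏ k ∈ Finset.univ.erase j, z s k ^ (θ k : ℂ) with hPedef
    have hMD : eNormC D ≤ M := by
      have h := hM (fun k => s * t k)
      have heq : ((Complex.I • (1 : Matrix (Fin n) (Fin n) ℂ)
          + Matrix.diagonal (fun k => (((α k)⁻¹ : ℝ) : ℂ))
            * Matrix.diagonal (fun k => (((fun k => s * t k) k : ℝ) : ℂ))).mulVec
              (G (fun k => s * t k))
        + fun j => ((θ j / α j : ℝ) : ℂ) * φ (fun k => s * t k)) = D := by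
        funext j
        simp only [hDdef, Matrix.add_mulVec, Matrix.smul_mulVec, Matrix.one_mulVec,
          Matrix.diagonal_mul_diagonal, Matrix.mulVec_diagonal, Pi.add_apply, Pi.smul_apply,
          smul_eq_mul]
        push_cast
        ring
      rw [heq] at h
      exact h
    have hIz : ∀ j, Complex.I * z s j = Complex.I + (((α j)⁻¹ * (s * t j) : ℝ) : ℂ) := by
      intro j
      have hreal : ((α j)⁻¹ * (s * t j) : ℝ) = s * c j := by
        simp only [hc]; ring
      rw [hreal]
      simp only [hzdef]
      push_cast
      linear_combination (-((s : ℂ) * ((t j / α j : ℝ) : ℂ))) * Complex.I_mul_I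
    have hA : ∀ j, z s j ^ (θ j : ℂ) = z s j * z s j ^ ((θ j : ℂ) - 1) := by
      intro j
      have h1 : (θ j : ℂ) = 1 + ((θ j : ℂ) - 1) := by ring
      rw [h1, Complex.cpow_add _ _ (hzne s j), Complex.cpow_one]
      ring_nf
    have hPej : ∀ j, z s j ^ (θ j : ℂ) * Pe j = P s := by
      intro j
      simp only [hPedef, hPdef]
      exact Finset.mul_prod_erase Finset.univ (fun k => z s k ^ (θ k : ℂ)) (Finset.mem_univ j)
    have hTB : ∀ j, (t j : ℂ) * ((θ j / α j : ℝ) : ℂ) = (θ j : ℂ) * ((c j : ℝ) : ℂ) := by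
      intro j
      simp only [hc]
      push_cast
      ring
    -- rewrite g' s as a single sum
    have hkey : g' s = ∑ j, (-(Complex.I * (t j : ℂ))
        * (ψ * (Pe j * z s j ^ ((θ j : ℂ) - 1)))) * D j := by
      simp only [hg'def, smul_eq_mul]
      rw [Finset.sum_mul, Finset.mul_sum, ← Finset.sum_add_distrib, Finset.mul_sum]
      refine Finset.sum_congr rfl fun j _ => ?_
      simp only [hDdef]
      rw [← hIz j, ← hPej j, hA j]
      linear_combination ((t j : ℂ) * ψ * G (fun k => s * t k) j * z s j
            * z s j ^ ((θ j : ℂ) - 1) * Pe j) * Complex.I_mul_I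
        + (Complex.I * ψ * φ (fun k => s * t k) * Pe j
            * z s j ^ ((θ j : ℂ) - 1)) * hTB j
    -- bound the absolute value of each coefficient
    have hq : ∀ j, ‖ψ * (Pe j * z s j ^ ((θ j : ℂ) - 1))‖ ≤ 1 := by
      intro j
      have hb : ∀ k, 1 ≤ ‖z s k‖ := fun k => h1z s k
      have hbpos : ∀ k, (0:ℝ) < ‖z s k‖ := fun k => lt_of_lt_of_le one_pos (hb k)
      have hba : ∀ k, ‖z s k‖ ≤ ‖z 1 k‖ := hzmono s hs
      have hapos : ∀ k, (0:ℝ) < ‖z 1 k‖ := fun k => lt_of_lt_of_le one_pos (h1z 1 k)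
      have habsψ : ‖ψ‖ = ∏ k, ‖z 1 k‖ ^ (-(θ k)) := by
        simp only [hψdef]
        unfold prodGammaCharFun
        rw [Complex.norm_prod]
        refine Finset.prod_congr rfl fun k _ => ?_
        have hbase : (1 - Complex.I * ((t k / α k : ℝ) : ℂ)) = z 1 k := by
          simp [hzdef, hc]
        rw [hbase, show -((θ k : ℝ) : ℂ) = ((-(θ k) : ℝ) : ℂ) by push_cast; ring,
          Complex.norm_cpow_real]
      have habsPe : ‖Pe j‖
          = ∏ k ∈ Finset.univ.erase j, ‖z s k‖ ^ (θ k) := by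
        simp only [hPedef]
        rw [Complex.norm_prod]
        exact Finset.prod_congr rfl fun k _ => by rw [Complex.norm_cpow_real]
      have habsz : ‖z s j ^ ((θ j : ℂ) - 1)‖ = ‖z s j‖ ^ (θ j - 1) := by
        rw [show (θ j : ℂ) - 1 = ((θ j - 1 : ℝ) : ℂ) by push_cast; ring, Complex.norm_cpow_real]
      have h4 : ‖z s j‖ ^ (θ j - 1) ≤ ‖z s j‖ ^ (θ j) := by
        rw [Real.rpow_sub (hbpos j), Real.rpow_one]
        exact div_le_self (Real.rpow_nonneg (hbpos j).le _) (hb j)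
      rw [norm_mul, norm_mul, habsψ, habsPe, habsz]
      calc (∏ k, ‖z 1 k‖ ^ (-(θ k)))
            * ((∏ k ∈ Finset.univ.erase j, ‖z s k‖ ^ (θ k))
              * ‖z s j‖ ^ (θ j - 1))
          ≤ (∏ k, ‖z 1 k‖ ^ (-(θ k))) * ∏ k, ‖z s k‖ ^ (θ k) := by
            refine mul_le_mul_of_nonneg_left ?_ (Finset.prod_nonneg fun k _ =>
              Real.rpow_nonneg (hapos k).le _)
            calc (∏ k ∈ Finset.univ.erase j, ‖z s k‖ ^ (θ k))
                  * ‖z s j‖ ^ (θ j - 1)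
                ≤ (∏ k ∈ Finset.univ.erase j, ‖z s k‖ ^ (θ k))
                  * ‖z s j‖ ^ (θ j) :=
                  mul_le_mul_of_nonneg_left h4 (Finset.prod_nonneg fun k _ =>
                    Real.rpow_nonneg (hbpos k).le _)
              _ = ∏ k, ‖z s k‖ ^ (θ k) := by
                  rw [mul_comm]
                  exact Finset.mul_prod_erase Finset.univ
                    (fun k => ‖z s k‖ ^ (θ k)) (Finset.mem_univ j)
        _ = ∏ k, (‖z 1 k‖ ^ (-(θ k)) * ‖z s k‖ ^ (θ k)) := by
            rw [Finset.prod_mul_distrib]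
        _ ≤ 1 := by
            refine Finset.prod_le_one (fun k _ => mul_nonneg (Real.rpow_nonneg (hapos k).le _)
              (Real.rpow_nonneg (hbpos k).le _)) fun k _ => ?_
            rw [Real.rpow_neg (hapos k).le, inv_mul_eq_div,
              ← Real.div_rpow (hbpos k).le (hapos k).le]
            exact Real.rpow_le_one (div_nonneg (hbpos k).le (hapos k).le)
              ((div_le_one (hapos k)).2 (hba k)) (hθ k).le
    -- put everything together
    rw [hkey]
    calc ‖∑ j, (-(Complex.I * (t j : ℂ))
          * (ψ * (Pe j * z s j ^ ((θ j : ℂ) - 1)))) * D j‖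
        ≤ ∑ j, ‖(-(Complex.I * (t j : ℂ))
          * (ψ * (Pe j * z s j ^ ((θ j : ℂ) - 1)))) * D j‖ := norm_sum_le _ _
      _ ≤ ∑ j, |t j| * ‖D j‖ := by
          refine Finset.sum_le_sum fun j _ => ?_
          rw [norm_mul, norm_mul, norm_neg, norm_mul]
          simp only [Complex.norm_I, one_mul, Complex.norm_real, Real.norm_eq_abs]
          have h1 := hq j
          have h2 : ‖D j‖ ≤ ‖D j‖ := le_rfl
          calc |t j| * ‖ψ * (Pe j * z s j ^ ((θ j : ℂ) - 1))‖ * ‖D j‖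
              ≤ |t j| * 1 * ‖D j‖ := by
                have := mul_le_mul_of_nonneg_left h1 (abs_nonneg (t j))
                exact mul_le_mul_of_nonneg_right this (norm_nonneg _)
            _ = |t j| * ‖D j‖ := by ring
      _ ≤ eNormR t * eNormC D := by
          rw [eNormR, eNormC, ← Real.sqrt_mul (Finset.sum_nonneg fun i _ => sq_nonneg _)]
          rw [← Real.sqrt_sq (Finset.sum_nonneg fun j _ =>
            mul_nonneg (abs_nonneg _) (norm_nonneg _))]
          apply Real.sqrt_le_sqrt
          have h := Finset.sum_mul_sq_le_sq_mul_sq Finset.univ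
            (fun j => |t j|) (fun j => ‖D j‖)
          simpa [sq_abs] using h
      _ ≤ eNormR t * M :=
          mul_le_mul_of_nonneg_left hMD (Real.sqrt_nonneg _)
  -- endpoints
  have hg0 : g 0 = ψ := by
    have hφ0 : φ (fun k => (0:ℝ) * t k) = 1 := by
      rw [hline 0]
      simp
    have hP0 : P 0 = 1 := by
      simp only [hPdef]
      have hz0 : ∀ k, z 0 k = 1 := fun k => by simp [hzdef]
      refine Finset.prod_eq_one fun k _ => ?_
      rw [hz0 k, Complex.one_cpow]
    simp only [hgdef, hφ0, hP0, mul_one]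
  have hψP1 : ψ * P 1 = 1 := by
    simp only [hψdef, hPdef]
    unfold prodGammaCharFun
    rw [← Finset.prod_mul_distrib]
    refine Finset.prod_eq_one fun k _ => ?_
    have hz1 : (1 - Complex.I * ((t k / α k : ℝ) : ℂ)) = z 1 k := by
      simp [hzdef, hc]
    rw [hz1, ← Complex.cpow_add _ _ (hzne 1 k), neg_add_cancel, Complex.cpow_zero]
  have hg1 : g 1 = φ t := by
    have ht1 : (fun k => (1:ℝ) * t k) = t := by funext k; rw [one_mul]
    simp only [hgdef, ht1]
    calc ψ * (φ t * P 1) = (ψ * P 1) * φ t := by ring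
      _ = φ t := by rw [hψP1, one_mul]
  -- conclude via mean value inequality
  have hmvt := norm_image_sub_le_of_norm_deriv_le_segment'
    (f := g) (f' := g') (C := eNormR t * M) (a := 0) (b := 1)
    (fun x hx => (hg x).hasDerivWithinAt)
    (fun x hx => hbound x (Set.Ico_subset_Icc_self hx))
    1 (by norm_num)
  rw [hg1, hg0] at hmvt
  simpa using hmvt
end
end

section
/- Let a > 0, λ ≥ 0, let X be a nonnegative real random variable, and let Y be a nonnegative integer random variable such that, conditionally on X = x, Y is Poisson distributed with mean a x + λ. Then for every k ∈ ℤ_{≥0} with P_Y(k) > 0, E[X | Y = k] = (1/a) · (k+1) P_Y(k+1)/P_Y(k) − λ/a. Moreover, if X is exponentially distributed with rate α > 0 (density α e^{−αx} for x ≥ 0), then P_Y(0) = α e^{−λ} / (α + a). -/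
open MeasureTheory ProbabilityTheory

noncomputable section

lemma stmt16_pois_le_one {t : ℝ} (ht : 0 ≤ t) (k : ℕ) :
    t ^ k * Real.exp (-t) / (Nat.factorial k) ≤ 1 := by
  have h1 : t ^ k / (Nat.factorial k) ≤ Real.exp t := by
    calc t ^ k / (Nat.factorial k)
        ≤ ∑ i ∈ Finset.range (k+1), t ^ i / (Nat.factorial i) := by
          refine Finset.single_le_sum (f := fun i => t ^ i / (Nat.factorial i)) ?_ ?_
          · intro i _; positivity
          · exact Finset.self_mem_range_succ k
      _ ≤ Real.exp t := Real.sum_le_exp_of_nonneg ht _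
  calc t ^ k * Real.exp (-t) / (Nat.factorial k)
      = (t ^ k / (Nat.factorial k)) * Real.exp (-t) := by ring
    _ ≤ Real.exp t * Real.exp (-t) :=
        mul_le_mul_of_nonneg_right h1 (Real.exp_pos _).le
    _ = 1 := by rw [← Real.exp_add]; simp

lemma stmt16_exp_int {c : ℝ} (hc : 0 < c) :
    ∫ x in Set.Ioi (0:ℝ), Real.exp (-(c * x)) = 1 / c := by
  have h := MeasureTheory.integral_comp_mul_left_Ioi (fun x => Real.exp (-x)) 0 hc
  simp only [mul_zero, integral_exp_neg_Ioi_zero, smul_eq_mul, mul_one] at h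
  rw [h, one_div]

/-- if `Y | X = x` is Poisson with mean `a x + λ`, then for every `k` with
`P_Y(k) > 0`, `E[X | Y = k] = (1/a)(k+1) P_Y(k+1)/P_Y(k) - λ/a`; moreover if `X` is
exponential with rate `α`, then `P_Y(0) = α e^{-λ}/(α + a)`. -/
theorem stmt16 {Ω : Type} [MeasurableSpace Ω] (μ : Measure Ω) [IsProbabilityMeasure μ]
    (a lam : ℝ) (ha : 0 < a) (hlam : 0 ≤ lam)
    (X : Ω → ℝ) (hX : Measurable X) (hXpos : ∀ ω, 0 ≤ X ω)
    (Y : Ω → ℕ) (hY : Measurable Y)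
    (hPo : ∀ (k : ℕ) (B : Set ℝ), MeasurableSet B →
      (μ {ω | Y ω = k ∧ X ω ∈ B}).toReal
        = ∫ ω in {ω | X ω ∈ B},
            (a * X ω + lam) ^ k * Real.exp (-(a * X ω + lam)) / (Nat.factorial k) ∂μ) :
    (∀ k : ℕ, 0 < (μ {ω | Y ω = k}).toReal →
      condExpEvent μ {ω | Y ω = k} X
        = (1 / a) * ((k + 1 : ℝ) * (μ {ω | Y ω = k + 1}).toReal
            / (μ {ω | Y ω = k}).toReal) - lam / a)
    ∧ (∀ α : ℝ, 0 < α → Measure.map X μ = expMeasure α →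
        (μ {ω | Y ω = 0}).toReal = α * Real.exp (-lam) / (α + a)) := by
  set p : ℕ → ℝ → ℝ :=
    fun k x => (a * x + lam) ^ k * Real.exp (-(a * x + lam)) / (Nat.factorial k) with hp
  have hpm : ∀ k, Measurable (p k) := by
    intro k
    apply Measurable.div _ measurable_const
    exact ((measurable_const.mul measurable_id').add measurable_const |>.pow_const k).mul
      (((measurable_const.mul measurable_id').add measurable_const).neg.exp)
  have hp0 : ∀ k x, 0 ≤ x → 0 ≤ p k x := by
    intro k x hx
    have : (0:ℝ) ≤ a * x + lam := by positivity
    positivity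
  have hp1 : ∀ k x, 0 ≤ x → p k x ≤ 1 := by
    intro k x hx
    have h : (0:ℝ) ≤ a * x + lam := by positivity
    exact stmt16_pois_le_one h k
  -- integrability of p k ∘ X
  have hint : ∀ k, Integrable (fun ω => p k (X ω)) μ := by
    intro k
    refine Integrable.mono' (integrable_const 1) ((hpm k).comp hX).aestronglyMeasurable ?_
    filter_upwards with ω
    rw [Real.norm_eq_abs, abs_of_nonneg (hp0 k _ (hXpos ω))]
    exact hp1 k _ (hXpos ω)
  -- marginal pmf of Y
  have hμk : ∀ k : ℕ, (μ {ω | Y ω = k}).toReal = ∫ ω, p k (X ω) ∂μ := by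
    intro k
    have h := hPo k Set.univ MeasurableSet.univ
    simpa only [Set.mem_univ, and_true, Set.setOf_true, Measure.restrict_univ] using h
  -- key measure identity
  have hYk : ∀ k : ℕ, MeasurableSet {ω | Y ω = k} := fun k => hY (measurableSet_singleton k)
  have hmeq : ∀ k : ℕ, Measure.map X (μ.restrict {ω | Y ω = k})
      = (Measure.map X μ).withDensity (fun x => ENNReal.ofReal (p k x)) := by
    intro k
    ext B hB
    rw [Measure.map_apply hX hB, Measure.restrict_apply (hX hB),
      withDensity_apply _ hB, setLIntegral_map hB ((hpm k).ennreal_ofReal) hX]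
    have h1 : ∫⁻ ω in X ⁻¹' B, ENNReal.ofReal (p k (X ω)) ∂μ
        = ENNReal.ofReal (∫ ω in X ⁻¹' B, p k (X ω) ∂μ) := by
      rw [← ofReal_integral_eq_lintegral_ofReal ((hint k).restrict)
        (Filter.Eventually.of_forall fun ω => hp0 k _ (hXpos ω))]
    rw [h1]
    have h2 : X ⁻¹' B ∩ {ω | Y ω = k} = {ω | Y ω = k ∧ X ω ∈ B} := by
      ext ω; simp [Set.mem_inter_iff, and_comm]
    have h3 : {ω | X ω ∈ B} = X ⁻¹' B := rfl
    rw [h2, ← ENNReal.ofReal_toReal (measure_ne_top μ {ω | Y ω = k ∧ X ω ∈ B}),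
      hPo k B hB, h3]
  -- a.e. nonnegativity under the pushforward
  have haep : ∀ᵐ x ∂(Measure.map X μ), 0 ≤ x := by
    rw [ae_map_iff hX.aemeasurable measurableSet_Ici]
    exact Filter.Eventually.of_forall hXpos
  -- integral over {Y = k}
  have hXint : ∀ k : ℕ, ∫ ω in {ω | Y ω = k}, X ω ∂μ = ∫ ω, X ω * p k (X ω) ∂μ := by
    intro k
    have e1 : ∫ ω in {ω | Y ω = k}, X ω ∂μ
        = ∫ x, x ∂(Measure.map X (μ.restrict {ω | Y ω = k})) :=
      (integral_map hX.aemeasurable aestronglyMeasurable_id).symm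
    have e2 : ∫ x, x ∂((Measure.map X μ).withDensity (fun x => ENNReal.ofReal (p k x)))
        = ∫ x, ((p k x).toNNReal : ℝ) • x ∂(Measure.map X μ) := by
      exact integral_withDensity_eq_integral_smul ((hpm k).real_toNNReal) _
    have e3 : ∫ x, ((p k x).toNNReal : ℝ) • x ∂(Measure.map X μ)
        = ∫ x, x * p k x ∂(Measure.map X μ) := by
      refine integral_congr_ae ?_
      filter_upwards [haep] with x hx
      rw [smul_eq_mul, Real.coe_toNNReal _ (hp0 k x hx), mul_comm]
    have e4 : ∫ x, x * p k x ∂(Measure.map X μ) = ∫ ω, X ω * p k (X ω) ∂μ :=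
      integral_map hX.aemeasurable
        ((measurable_id'.mul (hpm k)).aestronglyMeasurable)
    rw [e1, hmeq k, e2, e3, e4]
  -- pointwise identity
  have hpt : ∀ (k : ℕ) (x : ℝ),
      x * p k x = (1 / a) * ((k + 1 : ℝ) * p (k+1) x) - (lam / a) * p k x := by
    intro k x
    simp only [hp, Nat.factorial_succ, pow_succ, Nat.cast_mul, Nat.cast_add, Nat.cast_one]
    have hf : ((Nat.factorial k : ℝ)) ≠ 0 := Nat.cast_ne_zero.mpr (Nat.factorial_ne_zero k)
    have hk1 : ((k:ℝ) + 1) ≠ 0 := by positivity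
    field_simp
    ring
  -- value of the numerator
  have hnum : ∀ k : ℕ, ∫ ω in {ω | Y ω = k}, X ω ∂μ
      = (1 / a) * ((k + 1 : ℝ) * (μ {ω | Y ω = k + 1}).toReal)
        - (lam / a) * (μ {ω | Y ω = k}).toReal := by
    intro k
    rw [hXint k]
    calc ∫ ω, X ω * p k (X ω) ∂μ
        = ∫ ω, ((1 / a) * ((k + 1 : ℝ) * p (k+1) (X ω)) - (lam / a) * p k (X ω)) ∂μ := by
          refine integral_congr_ae (Filter.Eventually.of_forall fun ω => ?_)
          exact hpt k (X ω)
      _ = (1 / a) * ((k + 1 : ℝ) * ∫ ω, p (k+1) (X ω) ∂μ)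
            - (lam / a) * ∫ ω, p k (X ω) ∂μ := by
          rw [integral_sub (((hint (k+1)).const_mul _).const_mul _) ((hint k).const_mul _),
            integral_const_mul, integral_const_mul, integral_const_mul]
      _ = (1 / a) * ((k + 1 : ℝ) * (μ {ω | Y ω = k + 1}).toReal)
            - (lam / a) * (μ {ω | Y ω = k}).toReal := by
          rw [hμk k, hμk (k+1)]
  constructor
  · intro k hk
    have hk0 : (μ {ω | Y ω = k}).toReal ≠ 0 := ne_of_gt hk
    rw [condExpEvent, hnum k]
    field_simp
  · intro α hα hmap
    have h0 : (μ {ω | Y ω = 0}).toReal = ∫ ω, Real.exp (-(a * X ω + lam)) ∂μ := by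
      rw [hμk 0]
      simp [hp]
    have h1 : ∫ ω, Real.exp (-(a * X ω + lam)) ∂μ
        = ∫ x, Real.exp (-(a * x + lam)) ∂(Measure.map X μ) :=
      (integral_map hX.aemeasurable
        (((measurable_const.mul measurable_id').add
          measurable_const).neg.exp.aestronglyMeasurable)).symm
    have hd : expMeasure α
        = volume.withDensity (fun x => ENNReal.ofReal (exponentialPDFReal α x)) := rfl
    have h2 : ∫ x, Real.exp (-(a * x + lam)) ∂(expMeasure α)
        = ∫ x, ((exponentialPDFReal α x).toNNReal : ℝ) • Real.exp (-(a * x + lam)) := by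
      rw [hd]
      exact integral_withDensity_eq_integral_smul
        ((measurable_exponentialPDFReal α).real_toNNReal) _
    have h3 : (fun x => ((exponentialPDFReal α x).toNNReal : ℝ) • Real.exp (-(a * x + lam)))
        = Set.indicator (Set.Ici (0:ℝ))
            (fun x => α * Real.exp (-lam) * Real.exp (-((α + a) * x))) := by
      funext x
      rw [smul_eq_mul, Real.coe_toNNReal _ (exponentialPDFReal_nonneg hα x)]
      rw [exponentialPDFReal, gammaPDFReal, Set.indicator_apply]
      by_cases hx : 0 ≤ x
      · rw [if_pos hx, if_pos (Set.mem_Ici.mpr hx)]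
        simp only [Real.rpow_one, Real.Gamma_one, div_one, sub_self, Real.rpow_zero, mul_one]
        have he : -(α * x) + -(a * x + lam) = -lam + -((α + a) * x) := by ring
        calc α * Real.exp (-(α * x)) * Real.exp (-(a * x + lam))
            = α * Real.exp (-(α * x) + -(a * x + lam)) := by rw [mul_assoc, Real.exp_add]
          _ = α * (Real.exp (-lam) * Real.exp (-((α + a) * x))) := by rw [he, Real.exp_add]
          _ = α * Real.exp (-lam) * Real.exp (-((α + a) * x)) := by ring
      · rw [if_neg hx, if_neg (by simpa using hx), zero_mul]
    have h4 : ∫ x, Set.indicator (Set.Ici (0:ℝ))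
          (fun x => α * Real.exp (-lam) * Real.exp (-((α + a) * x))) x
        = α * Real.exp (-lam) / (α + a) := by
      rw [integral_indicator measurableSet_Ici,
        MeasureTheory.integral_Ici_eq_integral_Ioi, integral_const_mul,
        stmt16_exp_int (by linarith : (0:ℝ) < α + a)]
      ring
    rw [h0, h1, hmap, h2, h3, h4]
end
end

section
/- Let X be a random vector in ℝ^n with E[‖X‖] < ∞ and characteristic function φ_X(t) = E[e^{i tᵀX}], and let Σ ∈ ℝ^{n×n} be a symmetric positive semidefinite matrix. Then for every t ∈ ℝ^n: | φ_X(t) − e^{−tᵀΣt/2} | ≤ ‖t‖ · max_{τ ∈ [0,1]} ‖ ∇φ_X(τ t) + τ Σ t φ_X(τ t) ‖. -/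
open MeasureTheory ProbabilityTheory

noncomputable section

lemma cs18 {n : ℕ} (t : Fin n → ℝ) (w : Fin n → ℂ) :
    ‖∑ j, (t j : ℂ) * w j‖ ≤ eNormR t * eNormC w := by
  calc ‖∑ j, (t j : ℂ) * w j‖ ≤ ∑ j, ‖(t j : ℂ) * w j‖ :=
        norm_sum_le _ _
    _ = ∑ j, |t j| * ‖w j‖ := by simp [norm_mul, Complex.norm_real]
    _ ≤ eNormR t * eNormC w := by
        have h := Finset.sum_mul_sq_le_sq_mul_sq Finset.univ (fun j => |t j|)
          (fun j => ‖w j‖)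
        have h0 : (0:ℝ) ≤ ∑ j, |t j| * ‖w j‖ :=
          Finset.sum_nonneg fun j _ => mul_nonneg (abs_nonneg _) (norm_nonneg _)
        have h2 := Real.sqrt_le_sqrt h
        rw [Real.sqrt_sq h0] at h2
        refine h2.trans_eq ?_
        rw [Real.sqrt_mul (Finset.sum_nonneg fun j _ => sq_nonneg _)]
        simp [eNormR, eNormC, sq_abs]

lemma abs_exp_I_mul (r : ℝ) : ‖Complex.exp (Complex.I * (r : ℂ))‖ = 1 := by
  simp [Complex.norm_exp]

lemma hasDerivAt_exp_I_mul (c : ℝ) (τ : ℝ) :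
    HasDerivAt (fun x : ℝ => Complex.exp (Complex.I * ((x * c : ℝ) : ℂ)))
      (Complex.I * (c : ℂ) * Complex.exp (Complex.I * ((τ * c : ℝ) : ℂ))) τ := by
  have h1 : HasDerivAt (fun x : ℝ => ((x * c : ℝ) : ℂ)) (c : ℂ) τ := by
    exact_mod_cast (hasDerivAt_mul_const c).ofReal_comp
  have h2 := (h1.const_mul Complex.I).cexp
  convert h2 using 1
  ring

/-- for a random vector `X` with `E‖X‖ < ∞` and a symmetric positive
semidefinite `Σ`, for every `t`,
`|φ_X(t) - e^{-tᵀΣt/2}| ≤ ‖t‖ ⬝ max_{τ ∈ [0,1]} ‖∇φ_X(τt) + τ Σ t φ_X(τt)‖`. -/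
theorem stmt18 {Ω : Type} [MeasurableSpace Ω] (μ : Measure Ω) [IsProbabilityMeasure μ]
    {n : ℕ} (X : Ω → Fin n → ℝ) (hX : Measurable X)
    (hint : Integrable (fun ω => eNormR (X ω)) μ)
    (S : Matrix (Fin n) (Fin n) ℝ) (hS : S.PosSemidef) :
    ∀ t : Fin n → ℝ, ∀ M : ℝ,
      (∀ τ : ℝ, τ ∈ Set.Icc (0 : ℝ) 1 →
        eNormC (fun j => gradCharFunVec μ X (τ • t) j
            + ((τ * S.mulVec t j : ℝ) : ℂ) * charFunVec μ X (τ • t)) ≤ M) →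
      ‖(charFunVec μ X t
          - ((Real.exp (-(dotProduct t (S.mulVec t)) / 2) : ℝ) : ℂ))‖
        ≤ eNormR t * M := by
  intro t M hM
  set q : ℝ := dotProduct t (S.mulVec t) with hq_def
  have hq : 0 ≤ q := by
    have h := (Matrix.posSemidef_iff_dotProduct_mulVec.mp hS).2 t
    simpa [star_trivial] using h
  set s : Ω → ℝ := fun ω => ∑ k, t k * X ω k with hs_def
  have hsmeas : Measurable s :=
    Finset.measurable_sum _ fun k _ => ((measurable_pi_apply k).comp hX).const_mul (t k)
  have henorm_nonneg : ∀ ω, 0 ≤ eNormR (X ω) := fun ω => Real.sqrt_nonneg _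
  have hXj_le : ∀ ω (j : Fin n), |X ω j| ≤ eNormR (X ω) := by
    intro ω j
    rw [eNormR, ← Real.sqrt_sq_eq_abs]
    exact Real.sqrt_le_sqrt (Finset.single_le_sum (f := fun i => X ω i ^ 2)
      (fun i _ => sq_nonneg _) (Finset.mem_univ j))
  set C : ℝ := ∑ k, |t k| with hC_def
  have hs_le : ∀ ω, |s ω| ≤ C * eNormR (X ω) := by
    intro ω
    calc |s ω| ≤ ∑ k, |t k * X ω k| := Finset.abs_sum_le_sum_abs _ _
      _ = ∑ k, |t k| * |X ω k| := by simp [abs_mul]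
      _ ≤ ∑ k, |t k| * eNormR (X ω) :=
          Finset.sum_le_sum fun k _ =>
            mul_le_mul_of_nonneg_left (hXj_le ω k) (abs_nonneg _)
      _ = C * eNormR (X ω) := by rw [← Finset.sum_mul]
  have hbound_int : Integrable (fun ω => C * eNormR (X ω)) μ := hint.const_mul C
  set F : ℝ → Ω → ℂ := fun τ ω => Complex.exp (Complex.I * ((τ * s ω : ℝ) : ℂ)) with hF_def
  set F' : ℝ → Ω → ℂ :=
    fun τ ω => Complex.I * (s ω : ℂ) * Complex.exp (Complex.I * ((τ * s ω : ℝ) : ℂ)) with hF'_def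
  have hsum : ∀ (τ : ℝ) ω, (∑ k, (τ • t) k * X ω k) = τ * s ω := by
    intro τ ω
    simp only [Pi.smul_apply, smul_eq_mul, hs_def, Finset.mul_sum, mul_assoc]
  have hφ : ∀ τ : ℝ, charFunVec μ X (τ • t) = ∫ ω, F τ ω ∂μ := by
    intro τ
    unfold charFunVec
    simp_rw [hsum]
    rfl
  have hFmeas : ∀ τ : ℝ, AEStronglyMeasurable (F τ) μ := by
    intro τ
    exact ((Complex.measurable_ofReal.comp (hsmeas.const_mul τ)).const_mul
      Complex.I).cexp.aestronglyMeasurable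
  have hF'meas : ∀ τ : ℝ, AEStronglyMeasurable (F' τ) μ := by
    intro τ
    exact (((Complex.measurable_ofReal.comp hsmeas).const_mul Complex.I).mul
      ((Complex.measurable_ofReal.comp (hsmeas.const_mul τ)).const_mul
        Complex.I).cexp).aestronglyMeasurable
  have hFnorm : ∀ (τ : ℝ) ω, ‖F τ ω‖ = 1 := fun τ ω => abs_exp_I_mul _
  have hF'norm : ∀ (τ : ℝ) ω, ‖F' τ ω‖ = |s ω| := by
    intro τ ω
    simp only [hF'_def, norm_mul, Complex.norm_I, abs_exp_I_mul,
      Complex.norm_real, Real.norm_eq_abs, one_mul, mul_one]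
  have hFint : ∀ τ : ℝ, Integrable (F τ) μ := by
    intro τ
    refine (integrable_const (1:ℝ)).mono' (hFmeas τ) (ae_of_all _ fun ω => ?_)
    rw [hFnorm]
  have hF'int : ∀ τ : ℝ, Integrable (F' τ) μ := by
    intro τ
    refine hbound_int.mono' (hF'meas τ) (ae_of_all _ fun ω => ?_)
    rw [hF'norm]
    exact hs_le ω
  have hDeriv : ∀ τ₀ : ℝ,
      HasDerivAt (fun τ => ∫ ω, F τ ω ∂μ) (∫ ω, F' τ₀ ω ∂μ) τ₀ := by
    intro τ₀
    refine (hasDerivAt_integral_of_dominated_loc_of_deriv_le (Metric.ball_mem_nhds τ₀ one_pos)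
      (Filter.Eventually.of_forall fun x => hFmeas x) (hFint τ₀) (hF'meas τ₀)
      (ae_of_all _ fun ω x _ => ?_) hbound_int
      (ae_of_all _ fun ω x _ => ?_)).2
    · rw [hF'norm]; exact hs_le ω
    · exact hasDerivAt_exp_I_mul (s ω) x
  -- swap sum and integral
  have hDsum : ∀ τ : ℝ,
      (∫ ω, F' τ ω ∂μ) = ∑ j, (t j : ℂ) * gradCharFunVec μ X (τ • t) j := by
    intro τ
    have hjint : ∀ j : Fin n,
        Integrable (fun ω => (t j : ℂ) *
          (Complex.I * (X ω j : ℂ) * Complex.exp (Complex.I * ((τ * s ω : ℝ) : ℂ)))) μ := by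
      intro j
      refine ((hint.const_mul (|t j|)).mono'
        ((((Complex.measurable_ofReal.comp ((measurable_pi_apply j).comp hX)).const_mul
          Complex.I).mul ((Complex.measurable_ofReal.comp
            (hsmeas.const_mul τ)).const_mul Complex.I).cexp).const_mul
          ((t j : ℝ) : ℂ)).aestronglyMeasurable (ae_of_all _ fun ω => ?_))
      simp only [norm_mul, Complex.norm_I, abs_exp_I_mul,
        Complex.norm_real, Real.norm_eq_abs, one_mul, mul_one]
      exact mul_le_mul_of_nonneg_left (hXj_le ω j) (abs_nonneg _)
    have : ∀ j : Fin n, (t j : ℂ) * gradCharFunVec μ X (τ • t) j =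
        ∫ ω, (t j : ℂ) *
          (Complex.I * (X ω j : ℂ) * Complex.exp (Complex.I * ((τ * s ω : ℝ) : ℂ))) ∂μ := by
      intro j
      unfold gradCharFunVec
      simp_rw [hsum]
      rw [integral_const_mul]
    simp_rw [this]
    rw [← integral_finset_sum _ fun j _ => hjint j]
    refine integral_congr_ae (ae_of_all _ fun ω => ?_)
    simp only [hF'_def]
    have hsc : ((s ω : ℝ) : ℂ) = ∑ k, (t k : ℂ) * (X ω k : ℂ) := by
      simp only [hs_def]
      push_cast
      rfl
    rw [hsc, Finset.mul_sum, Finset.sum_mul]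
    refine Finset.sum_congr rfl fun j _ => ?_
    ring
  -- derivative of the exponential factor
  have hE : ∀ τ : ℝ, HasDerivAt (fun x : ℝ => ((Real.exp (x ^ 2 * q / 2) : ℝ) : ℂ))
      (((τ * q * Real.exp (τ ^ 2 * q / 2) : ℝ) : ℂ)) τ := by
    intro τ
    have h1 : HasDerivAt (fun x : ℝ => x ^ 2 * q / 2) (τ * q) τ := by
      have := ((hasDerivAt_pow 2 τ).mul_const q).div_const 2
      exact this.congr_deriv (by rw [Nat.cast_ofNat, show 2 - 1 = 1 from rfl, pow_one]; ring)
    have h2 := h1.exp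
    have h3 := h2.ofReal_comp
    convert h3 using 1
    push_cast
    ring
  set g : ℝ → ℂ := fun τ => (∫ ω, F τ ω ∂μ) * ((Real.exp (τ ^ 2 * q / 2) : ℝ) : ℂ) with hg_def
  have hg : ∀ τ : ℝ, HasDerivAt g
      (((Real.exp (τ ^ 2 * q / 2) : ℝ) : ℂ) *
        ((∫ ω, F' τ ω ∂μ) + ((τ * q : ℝ) : ℂ) * (∫ ω, F τ ω ∂μ))) τ := by
    intro τ
    have := (hDeriv τ).mul (hE τ)
    exact this.congr_deriv (by push_cast; ring)
  have hM0 : 0 ≤ M := (Real.sqrt_nonneg _).trans (hM 0 ⟨le_refl 0, zero_le_one⟩)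
  have ht0 : 0 ≤ eNormR t := Real.sqrt_nonneg _
  -- the key pointwise identity
  have key : ∀ τ : ℝ,
      (∫ ω, F' τ ω ∂μ) + ((τ * q : ℝ) : ℂ) * (∫ ω, F τ ω ∂μ) =
      ∑ j, (t j : ℂ) * (gradCharFunVec μ X (τ • t) j
        + ((τ * S.mulVec t j : ℝ) : ℂ) * charFunVec μ X (τ • t)) := by
    intro τ
    rw [hDsum τ, ← hφ τ]
    simp only [mul_add, Finset.sum_add_distrib]
    congr 1
    push_cast [hq_def, dotProduct]
    rw [Finset.mul_sum, Finset.sum_mul]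
    refine Finset.sum_congr rfl fun j _ => ?_
    ring
  have hbound : ∀ τ ∈ Set.Icc (0:ℝ) 1,
      ‖((Real.exp (τ ^ 2 * q / 2) : ℝ) : ℂ) *
        ((∫ ω, F' τ ω ∂μ) + ((τ * q : ℝ) : ℂ) * (∫ ω, F τ ω ∂μ))‖ ≤
      Real.exp (q / 2) * (eNormR t * M) := by
    intro τ hτ
    rw [key τ]
    rw [norm_mul, Complex.norm_real, Real.norm_eq_abs,
      abs_of_pos (Real.exp_pos _)] 
    have h1 : Real.exp (τ ^ 2 * q / 2) ≤ Real.exp (q / 2) := by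
      apply Real.exp_le_exp.2
      have hτ2 : τ ^ 2 ≤ 1 := by nlinarith [hτ.1, hτ.2]
      nlinarith
    have h2 : ‖∑ j, (t j : ℂ) * (gradCharFunVec μ X (τ • t) j
        + ((τ * S.mulVec t j : ℝ) : ℂ) * charFunVec μ X (τ • t))‖ ≤ eNormR t * M := by
      refine (cs18 t _).trans ?_
      exact mul_le_mul_of_nonneg_left (hM τ hτ) ht0
    exact mul_le_mul h1 h2 (norm_nonneg _) (Real.exp_pos _).le
  have hmvt := (convex_Icc (0:ℝ) 1).norm_image_sub_le_of_norm_hasDerivWithin_le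
    (f := g) (fun x _ => (hg x).hasDerivWithinAt) hbound
    (Set.left_mem_Icc.2 zero_le_one) (Set.right_mem_Icc.2 zero_le_one)
  have hg0 : g 0 = 1 := by
    simp only [hg_def, hF_def]
    norm_num
  have hg1 : g 1 = charFunVec μ X t * ((Real.exp (q / 2) : ℝ) : ℂ) := by
    have := hφ 1
    rw [one_smul] at this
    simp only [hg_def, ← this]
    norm_num
  have hfinal : charFunVec μ X t - ((Real.exp (-q / 2) : ℝ) : ℂ) =
      ((Real.exp (-q / 2) : ℝ) : ℂ) * (g 1 - g 0) := by
    rw [hg1, hg0]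
    have hmul : ((Real.exp (-q / 2) : ℝ) : ℂ) * ((Real.exp (q / 2) : ℝ) : ℂ) = 1 := by
      have h0 : -q / 2 + q / 2 = 0 := by ring
      rw [← Complex.ofReal_mul, ← Real.exp_add, h0, Real.exp_zero, Complex.ofReal_one]
    linear_combination (-(charFunVec μ X t)) * hmul
  rw [hfinal]
  rw [norm_mul, Complex.norm_real, Real.norm_eq_abs, abs_of_pos (Real.exp_pos _)]
  have : ‖g 1 - g 0‖ ≤ Real.exp (q / 2) * (eNormR t * M) := by
    simpa using hmvt
  calc Real.exp (-q / 2) * ‖g 1 - g 0‖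
      ≤ Real.exp (-q / 2) * (Real.exp (q / 2) * (eNormR t * M)) :=
        mul_le_mul_of_nonneg_left this (Real.exp_pos _).le
    _ = eNormR t * M := by
        rw [← mul_assoc, ← Real.exp_add]
        have h0 : -q / 2 + q / 2 = 0 := by ring
        rw [h0, Real.exp_zero, one_mul]
end
end
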